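/- arXiv:2504.20286 — 5 statements merged into one kernel-verified Lean document; each statement's English description precedes it below -/
import Mathlib

section
/- For every n ≥ 1, the number of occurrences of the letter B among the first n letters of the golden string S equals ⌊(n+1)/φ⌋, where φ = (1+√5)/2. -/
/-- The finite golden strings: `gs 1 = [B]`, `gs 2 = [B, A]`, `gs n = gs (n-1) ++ gs (n-2)`.
Here `true` denotes the letter B and `false` denotes the letter A. -/
def gs : ℕ → List Bool
  | 0 => []
  | 1 => [true]
  | 2 => [true, false]
  | (n+3) => gs (n+2) ++ gs (n+1)

/-- The `i`-th letter (1-indexed) of the infinite golden string `S`;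
`true` = B, `false` = A.  Since `gs n` is a prefix of `gs (n+1)` and
`(gs (i+1)).length = F (i+2) ≥ i`, this is well-defined. -/
def goldenLetter (i : ℕ) : Bool := (gs (i+1)).getD (i-1) true

/-- `s` is the (index set of the) Zeckendorf decomposition of `n`:
a set of indices `≥ 2`, no two adjacent, with `n = ∑_{i ∈ s} F i`. -/
def IsZeck (n : ℕ) (s : Finset ℕ) : Prop :=
  (∀ i ∈ s, 2 ≤ i) ∧ (∀ i ∈ s, i + 1 ∉ s) ∧ n = ∑ i ∈ s, Nat.fib i

/-- `c` is the coefficient function of the Chung–Graham decomposition of `n`: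
`n = ∑_{i ≥ 1} c i * F (2i)` with `c i ∈ {0,1,2}` and a coefficient `0`
strictly between any two coefficients equal to `2`. -/
def IsCG (n : ℕ) (c : ℕ →₀ ℕ) : Prop :=
  (∀ i, c i ≤ 2) ∧ c 0 = 0 ∧
  (∀ i₁ i₂, i₁ < i₂ → c i₁ = 2 → c i₂ = 2 → ∃ j, i₁ < j ∧ j < i₂ ∧ c j = 0) ∧
  n = c.sum (fun i a => a * Nat.fib (2 * i))

/-- `n` has `F (2k)` as the smallest summand of its Zeckendorf decomposition. -/
def ZeckMin (k n : ℕ) : Prop :=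
  ∃ s : Finset ℕ, IsZeck n s ∧ 2 * k ∈ s ∧ ∀ i ∈ s, 2 * k ≤ i

/-- `n` has `F (2k)` or `2 F (2k)` as the smallest summand of its
Chung–Graham decomposition. -/
def CGMin (k n : ℕ) : Prop :=
  ∃ c : ℕ →₀ ℕ, IsCG n c ∧ 1 ≤ c k ∧ ∀ i < k, c i = 0

lemma gs_length (n : ℕ) : (gs (n+1)).length = Nat.fib (n+2) := by
  induction n using Nat.twoStepInduction with
  | zero => rfl
  | one => rfl
  | more n ih1 ih2 =>
    show (gs (n+2) ++ gs (n+1)).length = _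
    rw [List.length_append, ih1, ih2]
    have h : Nat.fib (n+2+2) = Nat.fib (n+2) + Nat.fib (n+3) := Nat.fib_add_two
    have h2 : Nat.fib (n+1+2) = Nat.fib (n+3) := rfl
    omega

lemma gs_prefix (n : ℕ) : gs (n+1) <+: gs (n+2) := by
  match n with
  | 0 => exact ⟨[false], rfl⟩
  | n+1 => exact ⟨gs (n+1), rfl⟩

lemma gs_prefix_le {a b : ℕ} (h : a ≤ b) : gs (a+1) <+: gs (b+1) := by
  induction b with
  | zero => simp [Nat.le_zero.mp h]
  | succ b ih =>
    rcases Nat.lt_or_ge a (b+1) with h'|h'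
    · exact (ih (Nat.lt_succ_iff.mp h')).trans (gs_prefix b)
    · have : a = b+1 := le_antisymm h h'
      subst this; exact List.prefix_rfl

lemma fib_ge (n : ℕ) : n + 1 ≤ Nat.fib (n+2) := by
  induction n using Nat.twoStepInduction with
  | zero => simp
  | one => decide
  | more n ih1 ih2 =>
    have h : Nat.fib (n+2+2) = Nat.fib (n+2) + Nat.fib (n+3) := Nat.fib_add_two
    have h2 : Nat.fib (n+1+2) = Nat.fib (n+3) := rfl
    omega

lemma goldenLetter_eq (m i : ℕ) (h1 : 1 ≤ i) (h2 : i ≤ Nat.fib (m+2)) :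
    goldenLetter i = (gs (m+1)).getD (i-1) true := by
  unfold goldenLetter
  rcases Nat.le_total i m with h | h
  · obtain ⟨t, ht⟩ := gs_prefix_le h
    rw [← ht, List.getD_append]
    rw [gs_length]
    have := fib_ge i
    have h3 : Nat.fib (i+2) = Nat.fib (i+2) := rfl
    omega
  · obtain ⟨t, ht⟩ := gs_prefix_le h
    rw [← ht, List.getD_append]
    rw [gs_length]
    omega

lemma letter_rec (m j : ℕ) (hj1 : 1 ≤ j) (hj2 : j ≤ Nat.fib (m+2)) :
    goldenLetter (Nat.fib (m+3) + j) = goldenLetter j := by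
  have hlen : (gs (m+2)).length = Nat.fib (m+3) := gs_length (m+1)
  have hf : Nat.fib (m+2+2) = Nat.fib (m+2) + Nat.fib (m+3) := Nat.fib_add_two
  have h1 : goldenLetter (Nat.fib (m+3) + j) = (gs (m+2+1)).getD (Nat.fib (m+3) + j - 1) true :=
    goldenLetter_eq (m+2) _ (by omega) (by omega)
  rw [h1]
  show (gs (m+2) ++ gs (m+1)).getD _ _ = _
  rw [List.getD_append_right _ _ _ _ (by omega : (gs (m+2)).length ≤ Nat.fib (m+3) + j - 1)]
  rw [hlen, show Nat.fib (m+3) + j - 1 - Nat.fib (m+3) = j - 1 by omega]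
  exact (goldenLetter_eq m j hj1 hj2).symm

noncomputable def psi : ℝ := (Real.sqrt 5 - 1) / 2
lemma s5_sq : Real.sqrt 5 ^ 2 = 5 := Real.sq_sqrt (by norm_num)
lemma s5_gt : (2.236:ℝ) < Real.sqrt 5 := by nlinarith [s5_sq, Real.sqrt_nonneg 5]
lemma s5_lt : Real.sqrt 5 < 2.2361 := by nlinarith [s5_sq, Real.sqrt_nonneg 5]
lemma psi_pos : 0 < psi := by unfold psi; nlinarith [s5_gt]
lemma psi_lt_one : psi < 1 := by unfold psi; nlinarith [s5_lt]
lemma psi_sq : psi ^ 2 = 1 - psi := by unfold psi; nlinarith [s5_sq]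
lemma psi_irr : Irrational psi := by
  have h5 : Irrational (Real.sqrt 5) := by
    have := (by norm_num : Nat.Prime 5).irrational_sqrt
    simpa using this
  rintro ⟨q, hq⟩
  apply h5
  refine ⟨2*q+1, ?_⟩
  have : psi = (Real.sqrt 5 - 1)/2 := rfl
  push_cast
  rw [hq, this]; ring

lemma dioph (t : ℕ) (p : ℤ) (ht : 1 ≤ t) (hp : 0 ≤ p) (hub : (p:ℝ) ≤ t * psi + 1) :
    1 / ((t:ℝ) * Real.sqrt 5 + 1) ≤ |(t:ℝ) * psi - p| := by
  set N : ℤ := p^2 + p*t - t^2 with hN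
  have hNne : N ≠ 0 := by
    intro h0
    have key : ((p:ℝ) - t * psi) * ((p:ℝ) + t * (psi + 1)) = (N:ℝ) := by
      push_cast [hN]; nlinarith [psi_sq]
    rw [h0] at key
    push_cast at key
    have hpos : (p:ℝ) + t * (psi + 1) > 0 := by
      have h1 : (1:ℝ) ≤ (t:ℝ) := by exact_mod_cast ht
      have h2 : (0:ℝ) ≤ (p:ℝ) := by exact_mod_cast hp
      nlinarith [psi_pos]
    have : (p:ℝ) = t * psi := by
      rcases mul_eq_zero.mp key with h|h
      · linarith
      · linarith
    have : psi = (p : ℝ) / (t : ℝ) := by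
      field_simp
      rw [this]; ring
    have htne : ((t:ℚ):ℝ) ≠ 0 := by
      simp; omega
    exact psi_irr ⟨(p : ℚ)/(t : ℚ), by push_cast [this]; ring⟩
  have hN1 : (1:ℝ) ≤ |(N:ℝ)| := by
    have : 1 ≤ |N| := Int.one_le_abs hNne
    calc (1:ℝ) = ((1:ℤ):ℝ) := by norm_num
      _ ≤ |(N:ℤ)| := by exact_mod_cast this
      _ = |(N:ℝ)| := by push_cast; ring
  have key : ((t:ℝ) * psi - p) * (-((p:ℝ) + t * (psi + 1))) = (N:ℝ) := by
    push_cast [hN]; nlinarith [psi_sq]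
  have ht1 : (1:ℝ) ≤ (t:ℝ) := by exact_mod_cast ht
  have hpos : 0 < (p:ℝ) + t * (psi + 1) := by nlinarith [psi_pos, (by exact_mod_cast hp : (0:ℝ) ≤ (p:ℝ)), (by exact_mod_cast ht : (1:ℝ) ≤ (t:ℝ))]
  have habs : |(t:ℝ) * psi - p| * ((p:ℝ) + t * (psi + 1)) = |(N:ℝ)| := by
    rw [← abs_of_pos hpos, ← abs_mul]
    rw [show ((t:ℝ) * psi - p) * ((p:ℝ) + t * (psi + 1)) = -(N:ℝ) by nlinarith [key]]
    exact abs_neg _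
  have hb : (p:ℝ) + t * (psi + 1) ≤ (t:ℝ) * Real.sqrt 5 + 1 := by
    have : Real.sqrt 5 = 2 * psi + 1 := by unfold psi; ring
    rw [this]; nlinarith [hub]
  have hb0 : (0:ℝ) < (t:ℝ) * Real.sqrt 5 + 1 := by nlinarith [s5_gt]
  rw [div_le_iff₀ hb0]
  calc (1:ℝ) ≤ |(N:ℝ)| := hN1
    _ = |(t:ℝ) * psi - p| * ((p:ℝ) + t * (psi + 1)) := habs.symm
    _ ≤ |(t:ℝ) * psi - p| * ((t:ℝ) * Real.sqrt 5 + 1) := by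
        apply mul_le_mul_of_nonneg_left hb (abs_nonneg _)
lemma fib_psi (k : ℕ) : (Nat.fib (k+1) : ℝ) * psi + (-psi)^(k+1) = Nat.fib k := by
  induction k using Nat.twoStepInduction with
  | zero => simp
  | one => norm_num [Nat.fib_one, Nat.fib_add_two]; nlinarith [psi_sq]
  | more k ih1 ih2 =>
    have h1 : Nat.fib (k+3) = Nat.fib (k+2) + Nat.fib (k+1) := by
      rw [Nat.fib_add_two]; ring
    have h2 : Nat.fib (k+2) = Nat.fib k + Nat.fib (k+1) := Nat.fib_add_two
    have hx : (-psi)^(k+3) = (-psi)^(k+1) + (-psi)^(k+2) := by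
      have : (-psi)^2 = 1 + (-psi) := by nlinarith [psi_sq]
      calc (-psi)^(k+3) = (-psi)^(k+1) * (-psi)^2 := by ring
        _ = (-psi)^(k+1) * (1 + (-psi)) := by rw [this]
        _ = (-psi)^(k+1) + (-psi)^(k+2) := by ring
    rw [h1]; push_cast [h2] at *
    nlinarith [ih1, ih2, hx]
lemma fib_s5 (k : ℕ) : (Nat.fib k : ℝ) * Real.sqrt 5 = (psi+1)^k - (-psi)^k := by
  induction k using Nat.twoStepInduction with
  | zero => simp
  | one => simp [psi]; ring
  | more k ih1 ih2 =>
    have h1 : Nat.fib (k+2) = Nat.fib k + Nat.fib (k+1) := Nat.fib_add_two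
    have ha : (psi+1)^(k+2) = (psi+1)^k + (psi+1)^(k+1) := by
      have : (psi+1)^2 = (psi+1) + 1 := by nlinarith [psi_sq]
      calc (psi+1)^(k+2) = (psi+1)^k * (psi+1)^2 := by ring
        _ = (psi+1)^k * ((psi+1)+1) := by rw [this]
        _ = (psi+1)^k + (psi+1)^(k+1) := by ring
    have hb : (-psi)^(k+2) = (-psi)^k + (-psi)^(k+1) := by
      have : (-psi)^2 = 1 + (-psi) := by nlinarith [psi_sq]
      calc (-psi)^(k+2) = (-psi)^k * (-psi)^2 := by ring
        _ = (-psi)^k * (1 + (-psi)) := by rw [this]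
        _ = (-psi)^k + (-psi)^(k+1) := by ring
    push_cast [h1]
    rw [ha, hb]; push_cast at ih1 ih2; linarith [ih1, ih2]

lemma psi_mul : (psi + 1) * psi = 1 := by nlinarith [psi_sq]

lemma psi_k_lt (m t : ℕ) (ht2 : t ≤ Nat.fib (m+4) + 1) :
    ((t:ℝ) * Real.sqrt 5 + 1) * psi^(m+5) < 1 := by
  have hf : (Nat.fib (m+4):ℝ) * Real.sqrt 5 = (psi+1)^(m+4) - (-psi)^(m+4) := fib_s5 (m+4)
  have ht : (t:ℝ) ≤ (Nat.fib (m+4):ℝ) + 1 := by exact_mod_cast ht2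
  have hs5pos : (0:ℝ) < Real.sqrt 5 := by nlinarith [s5_gt]
  have habs : |(-psi)^(m+4)| = psi^(m+4) := by
    rw [abs_pow, abs_neg, abs_of_pos psi_pos]
  have hneg : -(psi^(m+4)) ≤ (-psi)^(m+4) := by rw [← habs]; exact neg_abs_le _
  have h1 : (t:ℝ) * Real.sqrt 5 + 1 ≤ (psi+1)^(m+4) + psi^(m+4) + Real.sqrt 5 + 1 := by
    have h2 : (t:ℝ) * Real.sqrt 5 ≤ ((Nat.fib (m+4):ℝ) + 1) * Real.sqrt 5 :=
      mul_le_mul_of_nonneg_right ht hs5pos.le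
    nlinarith [hf, hneg]
  have hppos : (0:ℝ) < psi^(m+5) := pow_pos psi_pos _
  have step : ((t:ℝ) * Real.sqrt 5 + 1) * psi^(m+5)
      ≤ ((psi+1)^(m+4) + psi^(m+4) + Real.sqrt 5 + 1) * psi^(m+5) :=
    mul_le_mul_of_nonneg_right h1 hppos.le
  have hone : (psi+1)^(m+4) * psi^(m+4) = 1 := by
    rw [← mul_pow, psi_mul, one_pow]
  have expand : ((psi+1)^(m+4) + psi^(m+4) + Real.sqrt 5 + 1) * psi^(m+5)
      = psi + psi^(m+4)*psi^(m+5) + (Real.sqrt 5 + 1)*psi^(m+5) := by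
    calc ((psi+1)^(m+4) + psi^(m+4) + Real.sqrt 5 + 1) * psi^(m+5)
        = ((psi+1)^(m+4) * psi^(m+4)) * psi + psi^(m+4)*psi^(m+5)
          + (Real.sqrt 5 + 1)*psi^(m+5) := by ring
      _ = _ := by rw [hone]; ring
  have hb1 : psi^(m+4) ≤ psi^4 :=
    pow_le_pow_of_le_one psi_pos.le psi_lt_one.le (by omega)
  have hb2 : psi^(m+5) ≤ psi^5 :=
    pow_le_pow_of_le_one psi_pos.le psi_lt_one.le (by omega)
  have hprod : psi^(m+4)*psi^(m+5) ≤ psi^4*psi^5 :=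
    mul_le_mul hb1 hb2 hppos.le (pow_pos psi_pos 4).le
  have hlast : (Real.sqrt 5 + 1)*psi^(m+5) ≤ (Real.sqrt 5 + 1)*psi^5 :=
    mul_le_mul_of_nonneg_left hb2 (by linarith)
  have hp4 : psi^4 = 2 - 3*psi := by linear_combination (psi^2 - psi + 2) * psi_sq
  have hp5 : psi^5 = 5*psi - 3 := by linear_combination (psi^3 - psi^2 + 2*psi - 3) * psi_sq
  have numeric : psi + psi^4*psi^5 + (Real.sqrt 5 + 1)*psi^5 < 1 := by
    rw [hp4, hp5]
    have hd : psi = (Real.sqrt 5 - 1)/2 := rfl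
    rw [hd]
    nlinarith [s5_sq, s5_lt, s5_gt]
  calc ((t:ℝ) * Real.sqrt 5 + 1) * psi^(m+5) ≤ _ := step
    _ = psi + psi^(m+4)*psi^(m+5) + (Real.sqrt 5 + 1)*psi^(m+5) := expand
    _ ≤ psi + psi^4*psi^5 + (Real.sqrt 5 + 1)*psi^5 := by linarith
    _ < 1 := numeric

lemma floor_shift (m t : ℕ) (ht1 : 1 ≤ t) (ht2 : t ≤ Nat.fib (m+4) + 1) :
    ⌊(t:ℝ) * psi - (-psi)^(m+5)⌋ = ⌊(t:ℝ) * psi⌋ := by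
  set x := (t:ℝ) * psi with hx
  have hb0 : (0:ℝ) < (t:ℝ)*Real.sqrt 5 + 1 := by
    have : (1:ℝ) ≤ (t:ℝ) := by exact_mod_cast ht1
    nlinarith [s5_gt]
  have hkey := psi_k_lt m t ht2
  have hlt : psi^(m+5) < 1/((t:ℝ)*Real.sqrt 5+1) := by
    rw [lt_div_iff₀ hb0]; linarith
  have hxnn : 0 ≤ x := by
    have : (0:ℝ) ≤ (t:ℝ) := by positivity
    rw [hx]; nlinarith [psi_pos]
  set p : ℤ := ⌊x⌋ with hp
  have hp0 : 0 ≤ p := Int.floor_nonneg.mpr hxnn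
  have hxl : (p:ℝ) ≤ x := Int.floor_le x
  have hxu : x < (p:ℝ) + 1 := Int.lt_floor_add_one x
  have h1 := dioph t p ht1 hp0 (by rw [← hx]; linarith)
  have h2 := dioph t (p+1) ht1 (by omega) (by push_cast; rw [← hx]; linarith)
  rw [← hx] at h1 h2
  have e1 : psi^(m+5) < x - p := by
    rw [abs_of_nonneg (by linarith)] at h1; linarith
  have e2 : psi^(m+5) < (p:ℝ) + 1 - x := by
    have : |x - ((p:ℝ)+1)| = (p:ℝ)+1 - x := by rw [abs_of_nonpos (by linarith)]; ring
    push_cast at h2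
    rw [this] at h2; linarith
  have habs : |(-psi)^(m+5)| = psi^(m+5) := by
    rw [abs_pow, abs_neg, abs_of_pos psi_pos]
  have hub : (-psi)^(m+5) ≤ psi^(m+5) := by rw [← habs]; exact le_abs_self _
  have hlb : -(psi^(m+5)) ≤ (-psi)^(m+5) := by rw [← habs]; exact neg_abs_le _
  rw [Int.floor_eq_iff]
  constructor
  · push_cast; linarith
  · push_cast; linarith

lemma floor_val (t : ℕ) (n : ℤ) (h1 : (n:ℝ) ≤ t*psi) (h2 : (t:ℝ)*psi < n+1) :
    ⌊(t:ℝ)*psi⌋ = n := by rw [Int.floor_eq_iff]; exact ⟨h1, h2⟩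

lemma fl1 : ⌊(1:ℝ)*psi⌋ = 0 := by
  have := floor_val 1 0 (by unfold psi; push_cast; nlinarith [s5_gt]) (by unfold psi; push_cast; nlinarith [s5_lt])
  simpa using this
lemma fl2 : ⌊(2:ℝ)*psi⌋ = 1 := by
  have := floor_val 2 1 (by unfold psi; push_cast; nlinarith [s5_gt]) (by unfold psi; push_cast; nlinarith [s5_lt])
  simpa using this
lemma fl3 : ⌊(3:ℝ)*psi⌋ = 1 := by
  have := floor_val 3 1 (by unfold psi; push_cast; nlinarith [s5_gt]) (by unfold psi; push_cast; nlinarith [s5_lt])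
  simpa using this
lemma fl4 : ⌊(4:ℝ)*psi⌋ = 2 := by
  have := floor_val 4 2 (by unfold psi; push_cast; nlinarith [s5_gt]) (by unfold psi; push_cast; nlinarith [s5_lt])
  simpa using this
lemma fl5 : ⌊(5:ℝ)*psi⌋ = 3 := by
  have := floor_val 5 3 (by unfold psi; push_cast; nlinarith [s5_gt]) (by unfold psi; push_cast; nlinarith [s5_lt])
  simpa using this
lemma fl6 : ⌊(6:ℝ)*psi⌋ = 3 := by
  have := floor_val 6 3 (by unfold psi; push_cast; nlinarith [s5_gt]) (by unfold psi; push_cast; nlinarith [s5_lt])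
  simpa using this

lemma exists_fib_between (i : ℕ) (hi : 6 ≤ i) :
    ∃ m, Nat.fib (m+5) < i ∧ i ≤ Nat.fib (m+6) := by
  induction i with
  | zero => omega
  | succ i ih =>
    rcases Nat.lt_or_ge i 6 with h|h
    · have : i = 5 := by omega
      subst this
      exact ⟨0, by decide, by decide⟩
    · obtain ⟨m, h1, h2⟩ := ih h
      rcases Nat.lt_or_ge i (Nat.fib (m+6)) with h3|h3
      · exact ⟨m, by omega, by omega⟩
      · have h7 : Nat.fib (m+5+2) = Nat.fib (m+5) + Nat.fib (m+5+1) := Nat.fib_add_two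
        have e1 : Nat.fib (m+5+2) = Nat.fib (m+1+6) := by rw [show m+5+2 = m+1+6 by omega]
        have e2 : Nat.fib (m+5+1) = Nat.fib (m+6) := by rw [show m+5+1 = m+6 by omega]
        have e3 : Nat.fib (m+1+5) = Nat.fib (m+6) := by rw [show m+1+5 = m+6 by omega]
        have hpos : 0 < Nat.fib (m+5) := Nat.fib_pos.mpr (by omega)
        exact ⟨m+1, by omega, by omega⟩

lemma letter_iff (i : ℕ) (hi : 1 ≤ i) :
    goldenLetter i = true ↔ ⌊((i:ℝ)+1)*psi⌋ = ⌊(i:ℝ)*psi⌋ + 1 := by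
  induction i using Nat.strong_induction_on with
  | _ i ih =>
    rcases Nat.lt_or_ge i 6 with h6|h6
    · interval_cases i
      · have hl : goldenLetter 1 = true := by decide
        rw [hl]; push_cast
        rw [show ((1:ℝ)+1) = 2 by norm_num, fl1, fl2]
        simp
      · have hl : goldenLetter 2 = false := by decide
        rw [hl]; push_cast
        rw [show ((2:ℝ)+1) = 3 by norm_num, fl2, fl3]
        simp
      · have hl : goldenLetter 3 = true := by decide
        rw [hl]; push_cast
        rw [show ((3:ℝ)+1) = 4 by norm_num, fl3, fl4]
        simp
      · have hl : goldenLetter 4 = true := by decide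
        rw [hl]; push_cast
        rw [show ((4:ℝ)+1) = 5 by norm_num, fl4, fl5]
        simp
      · have hl : goldenLetter 5 = false := by decide
        rw [hl]; push_cast
        rw [show ((5:ℝ)+1) = 6 by norm_num, fl5, fl6]
        simp
    · obtain ⟨m, h1, h2⟩ := exists_fib_between i h6
      have hfib : Nat.fib (m+4+2) = Nat.fib (m+4) + Nat.fib (m+4+1) := Nat.fib_add_two
      have e1 : Nat.fib (m+4+2) = Nat.fib (m+6) := by rw [show m+4+2 = m+6 by omega]
      have e2 : Nat.fib (m+4+1) = Nat.fib (m+5) := by rw [show m+4+1 = m+5 by omega]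
      set j := i - Nat.fib (m+5) with hj
      have hj1 : 1 ≤ j := by omega
      have hj2 : j ≤ Nat.fib (m+4) := by omega
      have hi_eq : i = Nat.fib (m+5) + j := by omega
      have hfibpos : 0 < Nat.fib (m+5) := Nat.fib_pos.mpr (by omega)
      -- letter side
      have hL : goldenLetter i = goldenLetter j := by
        rw [hi_eq]
        have e3 : Nat.fib (m+2+3) = Nat.fib (m+5) := by rw [show m+2+3 = m+5 by omega]
        have e4 : Nat.fib (m+2+2) = Nat.fib (m+4) := by rw [show m+2+2 = m+4 by omega]
        rw [← e3]
        exact letter_rec (m+2) j hj1 (by omega)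
      -- real side
      have hfp : (Nat.fib (m+4+1):ℝ) * psi + (-psi)^(m+4+1) = Nat.fib (m+4) := fib_psi (m+4)
      rw [e2] at hfp
      have e5 : (-psi)^(m+4+1) = (-psi)^(m+5) := by rw [show m+4+1 = m+5 by omega]
      rw [e5] at hfp
      have hcast : (i:ℝ) = (Nat.fib (m+5):ℝ) + (j:ℝ) := by exact_mod_cast hi_eq
      have hreal1 : (i:ℝ) * psi = (Nat.fib (m+4):ℝ) + ((j:ℝ)*psi - (-psi)^(m+5)) := by
        linear_combination psi * hcast + hfp
      have hreal2 : ((i:ℝ)+1) * psi = (Nat.fib (m+4):ℝ) + (((j:ℝ)+1)*psi - (-psi)^(m+5)) := by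
        linear_combination psi * hcast + hfp
      have hF1 : ⌊(i:ℝ)*psi⌋ = (Nat.fib (m+4):ℤ) + ⌊(j:ℝ)*psi⌋ := by
        rw [hreal1, Int.floor_natCast_add, floor_shift m j hj1 (by omega)]
      have hF2 : ⌊((i:ℝ)+1)*psi⌋ = (Nat.fib (m+4):ℤ) + ⌊((j:ℝ)+1)*psi⌋ := by
        have hs : ((j:ℝ)+1) = ((j+1:ℕ):ℝ) := by push_cast; ring
        rw [hreal2, Int.floor_natCast_add, hs, floor_shift m (j+1) (by omega) (by omega)]
      have hIH := ih j (by omega) hj1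
      rw [hL, hIH, hF1, hF2]
      omega

lemma count_lemma (n : ℕ) (hn : 1 ≤ n) :
    ((((Finset.Icc 1 n).filter (fun i => goldenLetter i = true)).card : ℤ)) =
      ⌊((n : ℝ) + 1) * psi⌋ := by
  induction n, hn using Nat.le_induction with
  | base =>
    have h1 : Finset.Icc 1 1 = {1} := rfl
    rw [h1, Finset.filter_singleton, if_pos (by decide : goldenLetter 1 = true)]
    rw [show (((1:ℕ):ℝ)+1) = 2 by norm_num, fl2]
    simp
  | succ n hn ih =>
    have hIcc : Finset.Icc 1 (n+1) = insert (n+1) (Finset.Icc 1 n) :=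
      (Finset.insert_Icc_right_eq_Icc_add_one (by omega)).symm
    rw [hIcc, Finset.filter_insert]
    have hkey := letter_iff (n+1) (by omega)
    have hc1 : (((n+1:ℕ):ℝ)+1) = ((n:ℝ)+1) + 1 := by push_cast; ring
    have hc2 : (((n+1:ℕ)):ℝ) = ((n:ℝ)+1) := by push_cast; ring
    rw [hc1, hc2] at hkey
    rw [hc1]
    have hnn : (0:ℝ) ≤ (n:ℝ) := Nat.cast_nonneg n
    have hmono1 : ⌊((n:ℝ)+1)*psi⌋ ≤ ⌊(((n:ℝ)+1)+1)*psi⌋ :=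
      Int.floor_le_floor (by nlinarith [psi_pos])
    have hmono2 : ⌊(((n:ℝ)+1)+1)*psi⌋ ≤ ⌊((n:ℝ)+1)*psi⌋ + 1 := by
      rw [← Int.floor_add_one]
      exact Int.floor_le_floor (by nlinarith [psi_lt_one, psi_pos])
    by_cases hb : goldenLetter (n+1) = true
    · rw [if_pos hb, Finset.card_insert_of_notMem (by simp)]
      have heq := hkey.mp hb
      push_cast
      omega
    · rw [if_neg hb]
      have hne : ¬(⌊(((n:ℝ)+1)+1)*psi⌋ = ⌊((n:ℝ)+1)*psi⌋ + 1) := fun h => hb (hkey.mpr h)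
      omega

theorem count_B_prefix (n : ℕ) (hn : 1 ≤ n) :
    ((((Finset.Icc 1 n).filter (fun i => goldenLetter i = true)).card : ℤ)) =
      ⌊((n : ℝ) + 1) / ((1 + Real.sqrt 5) / 2)⌋ := by
  have hdiv : ((n:ℝ) + 1) / ((1 + Real.sqrt 5)/2) = ((n:ℝ)+1) * psi := by
    rw [div_eq_iff (by nlinarith [s5_gt])]
    unfold psi
    linear_combination (-((n:ℝ)+1)/4) * s5_sq
  rw [hdiv]
  exact count_lemma n hn
end

section
/- Fix k ≥ 1 and let p(j) denote the j-th smallest positive integer whose Zeckendorf decomposition has F_{2k} as its smallest summand. Then for ℓ ≥ 2, the integers n in this set with largest Zeckendorf summand F_{2k+ℓ} are exactly p(F_ℓ + 1), ..., p(F_{ℓ+1}), and for F_ℓ + 1 ≤ j ≤ F_{ℓ+1} one has p(j) = p(j − F_ℓ) + F_{2k+ℓ}. -/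
namespace ZeckAux

/-- The greedy Zeckendorf index: the largest `ℓ` with `fib ℓ ≤ m` (for `m ≥ 1`). -/
def zl (m : ℕ) : ℕ := Nat.findGreatest (fun ℓ => Nat.fib ℓ ≤ m) (m + 5)

lemma two_le_zl {m : ℕ} (hm : 1 ≤ m) : 2 ≤ zl m :=
  Nat.le_findGreatest (P := fun ℓ => Nat.fib ℓ ≤ m) (by omega)
    (by show Nat.fib 2 ≤ m; simpa using hm)

lemma fib_zl_le {m : ℕ} (hm : 1 ≤ m) : Nat.fib (zl m) ≤ m :=
  Nat.findGreatest_spec (P := fun ℓ => Nat.fib ℓ ≤ m) (m := 2) (by omega)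
    (by show Nat.fib 2 ≤ m; simpa using hm)

lemma lt_fib_zl_succ {m : ℕ} (hm : 1 ≤ m) : m < Nat.fib (zl m + 1) := by
  have hble : zl m ≤ m + 5 := Nat.findGreatest_le (P := fun ℓ => Nat.fib ℓ ≤ m) _
  have hzl : zl m < m + 5 := by
    rcases Nat.lt_or_ge (zl m) (m + 5) with h | h
    · exact h
    · exfalso
      have hP : Nat.fib (zl m) ≤ m := fib_zl_le hm
      have heq : zl m = m + 5 := le_antisymm hble h
      rw [heq] at hP
      have : m + 5 ≤ Nat.fib (m + 5) := Nat.le_fib_self (by omega)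
      omega
  have h := Nat.findGreatest_is_greatest (P := fun ℓ => Nat.fib ℓ ≤ m)
    (n := m + 5) (k := zl m + 1) (by exact lt_of_lt_of_le (Nat.lt_succ_self _) (le_refl _)) (by omega)
  simpa using Nat.lt_of_not_le h

lemma zl_eq {m ℓ : ℕ} (hℓ : 2 ≤ ℓ) (h1 : Nat.fib ℓ ≤ m) (h2 : m < Nat.fib (ℓ + 1)) :
    zl m = ℓ := by
  have hm : 1 ≤ m := le_trans (Nat.fib_pos.mpr (by omega)) h1
  rcases Nat.lt_trichotomy (zl m) ℓ with h | h | h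
  · have hmono : Nat.fib (zl m + 1) ≤ Nat.fib ℓ := Nat.fib_mono (by omega)
    have := lt_fib_zl_succ hm
    omega
  · exact h
  · have hmono : Nat.fib (ℓ + 1) ≤ Nat.fib (zl m) := Nat.fib_mono (by omega)
    have := fib_zl_le hm
    omega

/-- `g L m` is the `m`-th value (0-indexed) of the enumeration of numbers of the form
`∑ fib (L + i)` over nonadjacent finite sets of indices `i ≥ 2`. -/
def g (L : ℕ) : ℕ → ℕ
  | 0 => 0
  | (m+1) => Nat.fib (L + zl (m+1)) + g L (m + 1 - Nat.fib (zl (m+1)))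
decreasing_by
  have h2 : 2 ≤ zl (m+1) := two_le_zl (by omega)
  have h1 : 1 ≤ Nat.fib (zl (m+1)) := Nat.fib_pos.mpr (by omega)
  omega

@[simp] lemma g_zero (L : ℕ) : g L 0 = 0 := by rw [g]

lemma g_eq {L m ℓ : ℕ} (hℓ : 2 ≤ ℓ) (h1 : Nat.fib ℓ ≤ m) (h2 : m < Nat.fib (ℓ + 1)) :
    g L m = Nat.fib (L + ℓ) + g L (m - Nat.fib ℓ) := by
  have hm : 1 ≤ m := le_trans (Nat.fib_pos.mpr (by omega)) h1
  obtain ⟨m', rfl⟩ : ∃ m', m = m' + 1 := ⟨m - 1, by omega⟩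
  rw [g, zl_eq hℓ h1 h2]

lemma g_lt {L : ℕ} : ∀ m ℓ, m < Nat.fib (ℓ + 1) → g L m < Nat.fib (L + ℓ + 1) := by
  intro m
  induction m using Nat.strong_induction_on with
  | _ m ih =>
    intro ℓ hm
    rcases Nat.eq_zero_or_pos m with rfl | hpos
    · simpa using Nat.fib_pos.mpr (by omega)
    · set ℓ₀ := zl m with hℓ₀def
      have h2 : 2 ≤ ℓ₀ := two_le_zl hpos
      have hle : Nat.fib ℓ₀ ≤ m := fib_zl_le hpos
      have hlt : m < Nat.fib (ℓ₀ + 1) := lt_fib_zl_succ hpos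
      have hfibpos : 1 ≤ Nat.fib ℓ₀ := Nat.fib_pos.mpr (by omega)
      have hℓ₀ℓ : ℓ₀ ≤ ℓ := by
        by_contra h
        have : Nat.fib (ℓ + 1) ≤ Nat.fib ℓ₀ := Nat.fib_mono (by omega)
        omega
      have hsplit : Nat.fib (ℓ₀ + 1) = Nat.fib (ℓ₀ - 1) + Nat.fib ℓ₀ := by
        have h := Nat.fib_add_two (n := ℓ₀ - 1)
        have e1 : ℓ₀ - 1 + 2 = ℓ₀ + 1 := by omega
        have e2 : ℓ₀ - 1 + 1 = ℓ₀ := by omega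
        rw [e1, e2] at h; exact h
      have hm' : m - Nat.fib ℓ₀ < Nat.fib (ℓ₀ - 2 + 1) := by
        have e : ℓ₀ - 2 + 1 = ℓ₀ - 1 := by omega
        rw [e]; omega
      have ihh := ih (m - Nat.fib ℓ₀) (by omega) (ℓ₀ - 2) hm'
      have e3 : L + (ℓ₀ - 2) + 1 = L + ℓ₀ - 1 := by omega
      rw [e3] at ihh
      have hsplit2 : Nat.fib (L + ℓ₀ + 1) = Nat.fib (L + ℓ₀ - 1) + Nat.fib (L + ℓ₀) := by
        have h := Nat.fib_add_two (n := L + ℓ₀ - 1)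
        have e1 : L + ℓ₀ - 1 + 2 = L + ℓ₀ + 1 := by omega
        have e2 : L + ℓ₀ - 1 + 1 = L + ℓ₀ := by omega
        rw [e1, e2] at h; exact h
      have hmono : Nat.fib (L + ℓ₀ + 1) ≤ Nat.fib (L + ℓ + 1) := Nat.fib_mono (by omega)
      rw [g_eq h2 hle hlt]
      omega

lemma g_lt_succ {L : ℕ} : ∀ m, g L m < g L (m + 1) := by
  intro m
  induction m using Nat.strong_induction_on with
  | _ m ih =>
    rcases Nat.eq_zero_or_pos m with rfl | hpos
    · have h1 : g L 1 = Nat.fib (L + 2) + g L 0 :=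
        g_eq (le_refl 2) (by decide) (by decide)
      have h0 : 0 < Nat.fib (L + 2) := Nat.fib_pos.mpr (by omega)
      simp only [g_zero, h1]
      omega
    · set ℓ₀ := zl m with hℓ₀def
      have h2 : 2 ≤ ℓ₀ := two_le_zl hpos
      have hle : Nat.fib ℓ₀ ≤ m := fib_zl_le hpos
      have hlt : m < Nat.fib (ℓ₀ + 1) := lt_fib_zl_succ hpos
      have hfibpos : 1 ≤ Nat.fib ℓ₀ := Nat.fib_pos.mpr (by omega)
      rcases Nat.lt_or_ge (m + 1) (Nat.fib (ℓ₀ + 1)) with hcase | hcase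
      · have hg1 : g L (m + 1) = Nat.fib (L + ℓ₀) + g L (m + 1 - Nat.fib ℓ₀) :=
          g_eq h2 (by omega) hcase
        have hg2 : g L m = Nat.fib (L + ℓ₀) + g L (m - Nat.fib ℓ₀) :=
          g_eq h2 hle hlt
        have e : m + 1 - Nat.fib ℓ₀ = (m - Nat.fib ℓ₀) + 1 := by omega
        have hih := ih (m - Nat.fib ℓ₀) (by omega)
        rw [hg1, hg2, e]; omega
      · have heq : m + 1 = Nat.fib (ℓ₀ + 1) := by omega
        have hsplit : Nat.fib (ℓ₀ + 2) = Nat.fib ℓ₀ + Nat.fib (ℓ₀ + 1) :=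
          Nat.fib_add_two
        have hg1 : g L (m + 1) = Nat.fib (L + (ℓ₀ + 1)) + g L (m + 1 - Nat.fib (ℓ₀ + 1)) :=
          g_eq (by omega) (by omega) (by show m + 1 < Nat.fib (ℓ₀ + 2); omega)
        have e : m + 1 - Nat.fib (ℓ₀ + 1) = 0 := by omega
        have hb := g_lt (L := L) m ℓ₀ hlt
        rw [hg1, e, g_zero]
        have e2 : L + (ℓ₀ + 1) = L + ℓ₀ + 1 := by omega
        rw [e2]; omega

lemma g_strictMono (L : ℕ) : StrictMono (g L) :=
  strictMono_nat_of_lt_succ g_lt_succ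

lemma g_mem {L : ℕ} (hL : 2 ≤ L) : ∀ m ℓ, m < Nat.fib (ℓ + 1) →
    ∃ s : Finset ℕ, (∀ i ∈ s, L + 2 ≤ i) ∧ (∀ i ∈ s, i + 1 ∉ s) ∧ (∀ i ∈ s, i ≤ L + ℓ) ∧
      (2 ≤ ℓ → Nat.fib ℓ ≤ m → L + ℓ ∈ s) ∧ g L m = ∑ i ∈ s, Nat.fib i := by
  intro m
  induction m using Nat.strong_induction_on with
  | _ m ih =>
    intro ℓ hm
    rcases Nat.eq_zero_or_pos m with rfl | hpos
    · refine ⟨∅, by simp, by simp, by simp, ?_, by simp⟩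
      intro hℓ2 hfib
      have : 0 < Nat.fib ℓ := Nat.fib_pos.mpr (by omega)
      omega
    · set ℓ₀ := zl m with hℓ₀def
      have h2 : 2 ≤ ℓ₀ := two_le_zl hpos
      have hle : Nat.fib ℓ₀ ≤ m := fib_zl_le hpos
      have hlt : m < Nat.fib (ℓ₀ + 1) := lt_fib_zl_succ hpos
      have hfibpos : 1 ≤ Nat.fib ℓ₀ := Nat.fib_pos.mpr (by omega)
      have hℓ₀ℓ : ℓ₀ ≤ ℓ := by
        by_contra h
        have : Nat.fib (ℓ + 1) ≤ Nat.fib ℓ₀ := Nat.fib_mono (by omega)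
        omega
      have hsplit : Nat.fib (ℓ₀ + 1) = Nat.fib (ℓ₀ - 1) + Nat.fib ℓ₀ := by
        have h := Nat.fib_add_two (n := ℓ₀ - 1)
        have e1 : ℓ₀ - 1 + 2 = ℓ₀ + 1 := by omega
        have e2 : ℓ₀ - 1 + 1 = ℓ₀ := by omega
        rw [e1, e2] at h; exact h
      have hm' : m - Nat.fib ℓ₀ < Nat.fib (ℓ₀ - 2 + 1) := by
        have e : ℓ₀ - 2 + 1 = ℓ₀ - 1 := by omega
        rw [e]; omega
      obtain ⟨s', hs1, hs2, hs3, -, hs5⟩ := ih (m - Nat.fib ℓ₀) (by omega) (ℓ₀ - 2) hm'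
      have hbd : ∀ i ∈ s', i ≤ L + ℓ₀ - 2 := by
        intro i hi
        have := hs3 i hi
        omega
      have hnotmem : L + ℓ₀ ∉ s' := fun h => by have := hbd _ h; omega
      refine ⟨insert (L + ℓ₀) s', ?_, ?_, ?_, ?_, ?_⟩
      · intro i hi
        rcases Finset.mem_insert.mp hi with rfl | hi
        · omega
        · exact hs1 i hi
      · intro i hi
        rcases Finset.mem_insert.mp hi with rfl | hi
        · intro hc
          rcases Finset.mem_insert.mp hc with hc | hc
          · omega
          · have := hbd _ hc; omega
        · intro hc
          rcases Finset.mem_insert.mp hc with hc | hc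
          · have := hbd _ hi; omega
          · exact hs2 i hi hc
      · intro i hi
        rcases Finset.mem_insert.mp hi with rfl | hi
        · omega
        · have := hbd _ hi; omega
      · intro hℓ2 hfib
        have heq : ℓ₀ = ℓ := by rw [hℓ₀def]; exact zl_eq hℓ2 hfib hm
        rw [heq]
        exact Finset.mem_insert_self _ _
      · rw [Finset.sum_insert hnotmem, g_eq h2 hle hlt, hs5]

lemma g_sur {L : ℕ} (hL : 2 ≤ L) (s : Finset ℕ)
    (h2 : ∀ i ∈ s, L + 2 ≤ i) (hna : ∀ i ∈ s, i + 1 ∉ s) :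
    ∀ M, (∀ i ∈ s, i ≤ L + M) →
    ∃ m, m < Nat.fib (M + 1) ∧ (L + M ∈ s → Nat.fib M ≤ m) ∧
      g L m = ∑ i ∈ s, Nat.fib i := by
  induction s using Finset.strongInduction with
  | _ s ih =>
    intro M hM
    rcases Finset.eq_empty_or_nonempty s with rfl | hne
    · exact ⟨0, Nat.fib_pos.mpr (by omega), by simp, by simp⟩
    · set a := s.max' hne with ha
      have hamem : a ∈ s := s.max'_mem hne
      have haL : L + 2 ≤ a := h2 a hamem
      set ℓ₀ := a - L with hℓ₀
      have h2ℓ₀ : 2 ≤ ℓ₀ := by omega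
      have haeq : a = L + ℓ₀ := by omega
      set s' := s.erase a with hs'
      have hsub : s' ⊂ s := Finset.erase_ssubset hamem
      have hs'bd : ∀ i ∈ s', i ≤ a - 2 := by
        intro i hi
        have hile : i ≤ a := s.le_max' i (Finset.mem_of_mem_erase hi)
        have hine : i ≠ a := Finset.ne_of_mem_erase hi
        have hne1 : i ≠ a - 1 := by
          intro h
          have hmem' : i ∈ s := Finset.mem_of_mem_erase hi
          have hcontra := hna i hmem'
          rw [h] at hcontra
          have e : a - 1 + 1 = a := by omega
          rw [e] at hcontra
          exact hcontra hamem
        omega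
      obtain ⟨m', hm'lt, -, hm'⟩ := ih s' hsub
        (fun i hi => h2 i (Finset.mem_of_mem_erase hi))
        (fun i hi hc => hna i (Finset.mem_of_mem_erase hi) (Finset.mem_of_mem_erase hc))
        (ℓ₀ - 2) (fun i hi => by have := hs'bd i hi; omega)
      have hsplit : Nat.fib (ℓ₀ + 1) = Nat.fib (ℓ₀ - 1) + Nat.fib ℓ₀ := by
        have h := Nat.fib_add_two (n := ℓ₀ - 1)
        have e1 : ℓ₀ - 1 + 2 = ℓ₀ + 1 := by omega
        have e2 : ℓ₀ - 1 + 1 = ℓ₀ := by omega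
        rw [e1, e2] at h; exact h
      have e4 : ℓ₀ - 2 + 1 = ℓ₀ - 1 := by omega
      rw [e4] at hm'lt
      have hfibpos : 1 ≤ Nat.fib ℓ₀ := Nat.fib_pos.mpr (by omega)
      refine ⟨Nat.fib ℓ₀ + m', ?_, ?_, ?_⟩
      · have hℓ₀M : ℓ₀ ≤ M := by have := hM a hamem; omega
        have : Nat.fib (ℓ₀ + 1) ≤ Nat.fib (M + 1) := Nat.fib_mono (by omega)
        omega
      · intro hLM
        have h1 : L + M ≤ a := s.le_max' _ hLM
        have h2' : ℓ₀ = M := by have := hM a hamem; omega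
        rw [← h2']; omega
      · have hgeq : g L (Nat.fib ℓ₀ + m') =
            Nat.fib (L + ℓ₀) + g L (Nat.fib ℓ₀ + m' - Nat.fib ℓ₀) :=
          g_eq h2ℓ₀ (by omega) (by omega)
        have e5 : Nat.fib ℓ₀ + m' - Nat.fib ℓ₀ = m' := by omega
        rw [hgeq, e5, hm', ← haeq]
        exact Finset.add_sum_erase s Nat.fib hamem

lemma zeckmin_iff (k : ℕ) (hk : 1 ≤ k) (n : ℕ) :
    ZeckMin k n ↔ ∃ m, Nat.fib (2 * k) + g (2 * k) m = n := by
  constructor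
  · rintro ⟨s, ⟨hs2, hna, hsum⟩, hks, hmin⟩
    set s' := s.erase (2 * k) with hs'
    have hs'2 : ∀ i ∈ s', 2 * k + 2 ≤ i := by
      intro i hi
      have hge := hmin i (Finset.mem_of_mem_erase hi)
      have hne := Finset.ne_of_mem_erase hi
      have hne1 : i ≠ 2 * k + 1 := by
        intro h
        have hcontra := hna (2 * k) hks
        rw [← h] at hcontra
        exact hcontra (Finset.mem_of_mem_erase hi)
      omega
    obtain ⟨m, -, -, hm⟩ := g_sur (L := 2 * k) (by omega) s' hs'2
      (fun i hi hc => hna i (Finset.mem_of_mem_erase hi) (Finset.mem_of_mem_erase hc))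
      (s'.sup id) (fun i hi => le_trans (Finset.le_sup (f := id) hi) (by omega))
    refine ⟨m, ?_⟩
    rw [hm, hsum]
    exact Finset.add_sum_erase s Nat.fib hks
  · rintro ⟨m, rfl⟩
    have hm6 : m < Nat.fib (m + 5 + 1) := by
      have := Nat.le_fib_self (n := m + 5 + 1) (by omega)
      omega
    obtain ⟨s, hs1, hs2, hs3, -, hs5⟩ := g_mem (L := 2 * k) (by omega) m (m + 5) hm6
    have hnotmem : 2 * k ∉ s := fun h => by have := hs1 _ h; omega
    refine ⟨insert (2 * k) s, ⟨?_, ?_, ?_⟩, Finset.mem_insert_self _ _, ?_⟩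
    · intro i hi
      rcases Finset.mem_insert.mp hi with rfl | hi
      · omega
      · have := hs1 i hi; omega
    · intro i hi
      rcases Finset.mem_insert.mp hi with rfl | hi
      · intro hc
        rcases Finset.mem_insert.mp hc with hc | hc
        · omega
        · have := hs1 _ hc; omega
      · intro hc
        rcases Finset.mem_insert.mp hc with hc | hc
        · have := hs1 _ hi; omega
        · exact hs2 i hi hc
    · rw [Finset.sum_insert hnotmem, hs5]
    · intro i hi
      rcases Finset.mem_insert.mp hi with rfl | hi
      · omega
      · have := hs1 i hi; omega

lemma nth_zeckmin (k : ℕ) (hk : 1 ≤ k) (m : ℕ) :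
    Nat.nth (ZeckMin k) m = Nat.fib (2 * k) + g (2 * k) m := by
  classical
  set f : ℕ → ℕ := fun m => Nat.fib (2 * k) + g (2 * k) m with hf
  have hmono : StrictMono f := fun a b hab =>
    Nat.add_lt_add_left (g_strictMono (2 * k) hab) _
  have hmem : ∀ m, ZeckMin k (f m) := fun m => (zeckmin_iff k hk (f m)).mpr ⟨m, rfl⟩
  have hcount : Nat.count (ZeckMin k) (f m) = m := by
    rw [Nat.count_eq_card_filter_range]
    have heq : (Finset.range (f m)).filter (ZeckMin k) = (Finset.range m).image f := by
      ext x
      simp only [Finset.mem_filter, Finset.mem_range, Finset.mem_image]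
      constructor
      · rintro ⟨hx, hpx⟩
        obtain ⟨i, rfl⟩ := (zeckmin_iff k hk x).mp hpx
        exact ⟨i, hmono.lt_iff_lt.mp hx, rfl⟩
      · rintro ⟨i, hi, rfl⟩
        exact ⟨hmono hi, hmem i⟩
    rw [heq, Finset.card_image_of_injective _ hmono.injective, Finset.card_range]
  have h := Nat.nth_count (p := ZeckMin k) (hmem m)
  rw [hcount] at h
  exact h

end ZeckAux

theorem zeck_table_recursion (k : ℕ) (hk : 1 ≤ k) (ℓ : ℕ) (hℓ : 2 ≤ ℓ) :
    (∀ n : ℕ,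
        (∃ s : Finset ℕ, IsZeck n s ∧ 2 * k ∈ s ∧ (∀ i ∈ s, 2 * k ≤ i) ∧
            2 * k + ℓ ∈ s ∧ ∀ i ∈ s, i ≤ 2 * k + ℓ) ↔
        ∃ j : ℕ, Nat.fib ℓ + 1 ≤ j ∧ j ≤ Nat.fib (ℓ + 1) ∧
          n = Nat.nth (ZeckMin k) (j - 1)) ∧
    (∀ j : ℕ, Nat.fib ℓ + 1 ≤ j → j ≤ Nat.fib (ℓ + 1) →
        Nat.nth (ZeckMin k) (j - 1) =
          Nat.nth (ZeckMin k) (j - Nat.fib ℓ - 1) + Nat.fib (2 * k + ℓ)) := by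
  have hL : 2 ≤ 2 * k := by omega
  have hfibpos : 1 ≤ Nat.fib ℓ := Nat.fib_pos.mpr (by omega)
  constructor
  · intro n
    constructor
    · rintro ⟨s, ⟨hs2, hna, hsum⟩, hks, hmin, htop, hbd⟩
      set s' := s.erase (2 * k) with hs'def
      have hs'2 : ∀ i ∈ s', 2 * k + 2 ≤ i := by
        intro i hi
        have hge := hmin i (Finset.mem_of_mem_erase hi)
        have hne := Finset.ne_of_mem_erase hi
        have hne1 : i ≠ 2 * k + 1 := by
          intro h
          have hcontra := hna (2 * k) hks
          rw [← h] at hcontra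
          exact hcontra (Finset.mem_of_mem_erase hi)
        omega
      obtain ⟨m, hmlt, hmge, hm⟩ := ZeckAux.g_sur (L := 2 * k) (by omega) s' hs'2
        (fun i hi hc => hna i (Finset.mem_of_mem_erase hi) (Finset.mem_of_mem_erase hc))
        ℓ (fun i hi => hbd i (Finset.mem_of_mem_erase hi))
      have htop' : 2 * k + ℓ ∈ s' := Finset.mem_erase.mpr ⟨by omega, htop⟩
      have hfibm := hmge htop'
      refine ⟨m + 1, by omega, by omega, ?_⟩
      have e : m + 1 - 1 = m := by omega
      rw [e, ZeckAux.nth_zeckmin k hk m, hm, hsum]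
      exact (Finset.add_sum_erase s Nat.fib hks).symm
    · rintro ⟨j, hj1, hj2, rfl⟩
      have hm1 : Nat.fib ℓ ≤ j - 1 := by omega
      have hm2 : j - 1 < Nat.fib (ℓ + 1) := by omega
      obtain ⟨s, hs1, hs2, hs3, hs4, hs5⟩ := ZeckAux.g_mem (L := 2 * k) hL (j - 1) ℓ hm2
      have hmemtop : 2 * k + ℓ ∈ s := hs4 hℓ hm1
      have hnotmem : 2 * k ∉ s := fun h => by have := hs1 _ h; omega
      refine ⟨insert (2 * k) s, ⟨?_, ?_, ?_⟩, Finset.mem_insert_self _ _, ?_, ?_, ?_⟩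
      · intro i hi
        rcases Finset.mem_insert.mp hi with rfl | hi
        · omega
        · have := hs1 i hi; omega
      · intro i hi
        rcases Finset.mem_insert.mp hi with rfl | hi
        · intro hc
          rcases Finset.mem_insert.mp hc with hc | hc
          · omega
          · have := hs1 _ hc; omega
        · intro hc
          rcases Finset.mem_insert.mp hc with hc | hc
          · have := hs1 _ hi; omega
          · exact hs2 i hi hc
      · rw [ZeckAux.nth_zeckmin k hk, Finset.sum_insert hnotmem, hs5]
      · intro i hi
        rcases Finset.mem_insert.mp hi with rfl | hi
        · omega
        · have := hs1 i hi; omega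
      · exact Finset.mem_insert_of_mem hmemtop
      · intro i hi
        rcases Finset.mem_insert.mp hi with rfl | hi
        · omega
        · exact hs3 i hi
  · intro j hj1 hj2
    rw [ZeckAux.nth_zeckmin k hk, ZeckAux.nth_zeckmin k hk]
    have hm1 : Nat.fib ℓ ≤ j - 1 := by omega
    have hm2 : j - 1 < Nat.fib (ℓ + 1) := by omega
    have hgeq : ZeckAux.g (2 * k) (j - 1) =
        Nat.fib (2 * k + ℓ) + ZeckAux.g (2 * k) (j - 1 - Nat.fib ℓ) :=
      ZeckAux.g_eq hℓ hm1 hm2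
    have e : j - Nat.fib ℓ - 1 = j - 1 - Nat.fib ℓ := by omega
    rw [e, hgeq]
    omega
end

section
/- Fix k ≥ 1 and let p(j) be the j-th smallest positive integer whose Zeckendorf decomposition has F_{2k} as its smallest summand. Then for all j ≥ 1, p(j+1) − p(j) = F_{2k+1} if the j-th letter of the golden string S is A, and p(j+1) − p(j) = F_{2k+2} if the j-th letter of S is B. -/
namespace ZG
open List Nat

local instance : IsTrans ℕ fun a b ↦ b + 2 ≤ a where
  trans _a _b _c hba hcb := hcb.trans <| le_self_add.trans hba

def chain : ℕ → List ℕ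
  | 0 => [] | 1 => [] | 2 => []
  | (m+3) => (m+2) :: chain (m+1)

lemma chain_mem : ∀ m, ∀ y ∈ chain (m+2) ++ [0], y + 2 ≤ m + 3
  | 0 => by simp [chain]
  | 1 => by simp [chain]
  | (m+2) => by
    intro y hy
    rw [show m+2+2 = (m+2)+2 from rfl, chain, cons_append, mem_cons] at hy
    rcases hy with rfl | hy
    · omega
    · have := chain_mem m y hy
      omega

lemma chain_chain' : ∀ m, (chain m ++ [0]).Chain' (fun a b => b + 2 ≤ a)
  | 0 => by simp [chain, List.Chain']
  | 1 => by simp [chain, List.Chain']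
  | 2 => by simp [chain, List.Chain']
  | (m+3) => by
    rw [chain, cons_append, List.Chain', isChain_cons]
    refine ⟨fun y hy => ?_, chain_chain' (m+1)⟩
    rcases m with _ | m
    · simp [chain] at hy; omega
    · have := chain_mem m y (mem_of_mem_head? hy)
      omega

lemma chain_sum_shift (s : ℕ) : ∀ m, ((chain (m+2)).map (fun i => Nat.fib (i+s))).sum
    + (if Even m then Nat.fib (s+2) else Nat.fib (s+1)) = Nat.fib (m+2+s)
  | 0 => by simp [chain]; ring_nf
  | 1 => by
    simp [chain, Nat.even_iff]
    rw [show 3 + s = (s+1) + 2 by ring, Nat.fib_add_two, show 2 + s = s + 2 by ring]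
    exact Nat.add_comm _ _
  | (m+2) => by
    rw [chain, map_cons, List.sum_cons]
    have h := chain_sum_shift s m
    have hpar : (Even (m+2)) ↔ (Even m) := by
      simp [Nat.even_add_one, Nat.not_even_iff_odd, Nat.odd_add_one]
    simp only [show m+1+1 = m+2 from rfl, hpar]
    rw [add_assoc, h]
    rw [show m + 2 + 2 + s = (m + 2 + s) + 2 by ring, Nat.fib_add_two,
      show m+1+2+s = m+2+s+1 by ring]
    exact Nat.add_comm _ _

lemma chain_sum (m : ℕ) : ((chain (m+2)).map Nat.fib).sum + 1 = Nat.fib (m+2) := by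
  have h := chain_sum_shift 0 m
  simpa [ite_self] using h

lemma zeck_ne_nil {j : ℕ} (hj : 1 ≤ j) : Nat.zeckendorf j ≠ [] := by
  intro h
  have h2 := Nat.sum_zeckendorf_fib j
  rw [h] at h2
  simp at h2
  omega

lemma zeck_pairwise (j : ℕ) : (Nat.zeckendorf j ++ [0]).Pairwise (fun a b => b + 2 ≤ a) := by
  have h := Nat.isZeckendorfRep_zeckendorf j
  rwa [List.IsZeckendorfRep, List.isChain_iff_pairwise] at h

lemma zeck_two_le {j a : ℕ} (ha : a ∈ Nat.zeckendorf j) : 2 ≤ a := by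
  have h := (pairwise_append.1 (zeck_pairwise j)).2.2 a ha 0 (by simp)
  omega

def lastIdx (j : ℕ) : ℕ := (Nat.zeckendorf j).getLast?.getD 0

lemma zeck_concat {j : ℕ} (hj : 1 ≤ j) :
    ∃ L', Nat.zeckendorf j = L' ++ [lastIdx j] := by
  rcases (Nat.zeckendorf j).eq_nil_or_concat with h | ⟨L', a, h⟩
  · exact absurd h (zeck_ne_nil hj)
  · refine ⟨L', ?_⟩
    rw [h, lastIdx, h, concat_eq_append, getLast?_concat]; rfl

lemma two_le_lastIdx {j : ℕ} (hj : 1 ≤ j) : 2 ≤ lastIdx j := by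
  obtain ⟨L', hL⟩ := zeck_concat hj
  exact zeck_two_le (by rw [hL]; simp)

lemma zeckPred {j : ℕ} (hj : 1 ≤ j) {L' : List ℕ}
    (hL : Nat.zeckendorf j = L' ++ [lastIdx j]) :
    Nat.zeckendorf (j - 1) = L' ++ chain (lastIdx j) := by
  obtain ⟨m', hm⟩ : ∃ m', lastIdx j = m' + 2 := ⟨lastIdx j - 2, by have := two_le_lastIdx hj; omega⟩
  have hpw : ((L' ++ [m' + 2]) ++ [0]).Pairwise (fun a b => b + 2 ≤ a) := by
    have := zeck_pairwise j; rwa [hL, hm] at this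
  rw [append_assoc, pairwise_append] at hpw
  have hrep : (L' ++ chain (m'+2)).IsZeckendorfRep := by
    rw [List.IsZeckendorfRep, List.isChain_iff_pairwise, append_assoc, pairwise_append]
    refine ⟨hpw.1, ?_, ?_⟩
    · rw [← List.isChain_iff_pairwise]; exact chain_chain' (m'+2)
    · intro x hx y hy
      have hxm : m' + 2 + 2 ≤ x := hpw.2.2 x hx (m'+2) (by simp)
      have hy2 := chain_mem m' y hy
      omega
  have hsum : ((L' ++ chain (m'+2)).map Nat.fib).sum = j - 1 := by
    have hj' : ((Nat.zeckendorf j).map Nat.fib).sum = j := Nat.sum_zeckendorf_fib j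
    rw [hL, hm, map_append, List.sum_append] at hj'
    rw [map_append, List.sum_append]
    have := chain_sum m'
    simp at hj'
    omega
  rw [hm, ← hsum, Nat.zeckendorf_sum_fib hrep]

def sigma (s j : ℕ) : ℕ := ((Nat.zeckendorf j).map (fun i => Nat.fib (i+s))).sum

lemma sigma_succ (s : ℕ) {j : ℕ} (hj : 1 ≤ j) :
    sigma s j = sigma s (j-1) +
      (if Even (lastIdx j) then Nat.fib (s+2) else Nat.fib (s+1)) := by
  obtain ⟨L', hL⟩ := zeck_concat hj
  obtain ⟨m', hm⟩ : ∃ m', lastIdx j = m' + 2 := ⟨lastIdx j - 2, by have := two_le_lastIdx hj; omega⟩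
  have h1 : sigma s j = ((L'.map (fun i => Nat.fib (i+s))).sum) + Nat.fib (m' + 2 + s) := by
    rw [sigma, hL, hm, map_append, List.sum_append]; simp
  have h2 : sigma s (j-1) = ((L'.map (fun i => Nat.fib (i+s))).sum) +
      ((chain (m'+2)).map (fun i => Nat.fib (i+s))).sum := by
    rw [sigma, zeckPred hj hL, hm, map_append, List.sum_append]
  have hpar : (Even (m'+2)) ↔ (Even m') := by
    simp [Nat.even_add_one, Nat.not_even_iff_odd, Nat.odd_add_one]
  have h3 := chain_sum_shift s m'
  rw [h1, h2, hm]
  simp only [hpar]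
  omega


lemma gs_length : ∀ n, (gs (n+1)).length = Nat.fib (n+2)
  | 0 => by simp [gs]
  | 1 => by simp [gs]; rfl
  | (n+2) => by
    rw [gs, length_append, gs_length (n+1), gs_length n]
    have hf : Nat.fib (n+2+2) = Nat.fib (n+2) + Nat.fib (n+3) := by
      rw [show n+2+2 = (n+2)+2 from rfl, Nat.fib_add_two, show n+2+1 = n+3 from rfl]
    rw [show n+1+2 = n+3 from rfl] at *
    omega

lemma gs_getLast : ∀ n, (gs (n+1)).getD (Nat.fib (n+2) - 1) true = decide (Even n)
  | 0 => by simp [gs]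
  | 1 => by rw [show Nat.fib 3 = 2 from rfl]; simp [gs]
  | (n+2) => by
    rw [gs, List.getD_append_right, gs_length (n+1)]
    · rw [show Nat.fib (n+2+2) = Nat.fib (n+2) + Nat.fib (n+3) from Nat.fib_add_two]
      rw [show Nat.fib (n+2) + Nat.fib (n+3) - 1 - Nat.fib (n+3) = Nat.fib (n+2) - 1 by
        have := Nat.fib_pos.2 (show 0 < n+2 by omega); omega]
      rw [gs_getLast n]
      congr 1
      simp [Nat.even_add_one, Nat.not_even_iff_odd, Nat.odd_add_one]
    · rw [gs_length (n+1), show Nat.fib (n+2+2) = Nat.fib (n+2) + Nat.fib (n+3) from Nat.fib_add_two,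
        show n+1+2 = n+3 from rfl]
      have h2 := Nat.fib_pos.2 (show 0 < n+2 by omega)
      have h3 := Nat.fib_pos.2 (show 0 < n+3 by omega)
      omega

lemma getLastD_cons_of_ne_nil {a : ℕ} {l : List ℕ} (h : l ≠ []) :
    (a :: l).getLast?.getD 0 = l.getLast?.getD 0 := by
  cases l with
  | nil => exact absurd rfl h
  | cons b t => rw [List.getLast?_cons_cons]



lemma lastIdx_fib {n : ℕ} (hn : 2 ≤ n) : lastIdx (Nat.fib n) = n := by
  have hpos : 0 < Nat.fib n := Nat.fib_pos.2 (by omega)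
  rw [lastIdx, Nat.zeckendorf_of_pos hpos, Nat.greatestFib_fib (by omega)]
  simp

lemma lastIdx_one : lastIdx 1 = 2 := lastIdx_fib (n := 2) le_rfl
lemma lastIdx_two : lastIdx 2 = 3 := lastIdx_fib (n := 3) (by omega)

lemma lastIdx_add_fib {n j' : ℕ} (h1 : 1 ≤ j') (h2 : j' < Nat.fib (n+1)) :
    lastIdx (Nat.fib (n+2) + j') = lastIdx j' := by
  have hg : Nat.greatestFib (Nat.fib (n+2) + j') = n+2 := by
    have hub : Nat.fib (n+2) + j' < Nat.fib (n+3) := by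
      rw [show n+3 = (n+1)+2 from rfl, Nat.fib_add_two (n := n+1), show n+1+1 = n+2 from rfl]
      omega
    have h1' : n+2 ≤ Nat.greatestFib (Nat.fib (n+2) + j') := Nat.le_greatestFib.2 (by omega)
    have h2' : Nat.greatestFib (Nat.fib (n+2) + j') < n + 3 := Nat.greatestFib_lt.2 hub
    omega
  have hz : Nat.zeckendorf (Nat.fib (n+2) + j') = (n+2) :: Nat.zeckendorf j' := by
    rw [Nat.zeckendorf_of_pos (by omega), hg, Nat.add_sub_cancel_left]
  rw [lastIdx, hz, getLastD_cons_of_ne_nil (zeck_ne_nil h1)]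
  rfl


lemma gs_succ3 (n : ℕ) : gs (n+3) = gs (n+2) ++ gs (n+1) := rfl

lemma gs_letter : ∀ n, ∀ j, 1 ≤ j → j ≤ Nat.fib (n+2) →
    (gs (n+1)).getD (j-1) true = decide (Even (lastIdx j))
  | 0, j, h1, h2 => by
    have hj : j = 1 := by have hf : Nat.fib (0+2) = 1 := rfl; omega
    subst hj
    rw [lastIdx_one]
    simp [gs]
  | 1, j, h1, h2 => by
    have hf : Nat.fib 3 = 2 := rfl
    rw [hf] at h2
    interval_cases j
    · rw [lastIdx_one]; simp [gs]
    · rw [lastIdx_two]; simp [gs]; decide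
  | (n+2), j, h1, h2 => by
    have hlen : (gs (n+2)).length = Nat.fib (n+3) := gs_length (n+1)
    have hf4 : Nat.fib (n+2+2) = Nat.fib (n+2) + Nat.fib (n+3) := by
      rw [Nat.fib_add_two (n := n+2), show n+2+1 = n+3 from rfl]
    rw [show n+2+1 = n+3 from rfl, gs_succ3]
    by_cases hc : j ≤ Nat.fib (n+3)
    · rw [List.getD_append _ _ _ _ (by omega)]
      exact gs_letter (n+1) j h1 hc
    · push_neg at hc
      rw [List.getD_append_right _ _ _ _ (by omega), hlen]
      rcases eq_or_lt_of_le h2 with heq | hlt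
      · have hidx : j - 1 - Nat.fib (n+3) = Nat.fib (n+2) - 1 := by
          have h2p := Nat.fib_pos.2 (show 0 < n+2 by omega)
          omega
        rw [hidx, gs_getLast n, heq, lastIdx_fib (by omega)]
        have hpar : (Even (n+2+2)) ↔ Even n := by
          simp [Nat.even_add_one, Nat.not_even_iff_odd, Nat.odd_add_one]
        simp [hpar]
      · obtain ⟨j', hj'⟩ : ∃ j', j = Nat.fib (n+3) + j' := ⟨j - Nat.fib (n+3), by omega⟩
        subst hj'
        have h1' : 1 ≤ j' := by omega
        have h2' : j' < Nat.fib (n+2) := by omega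
        rw [show Nat.fib (n+3) + j' - 1 - Nat.fib (n+3) = j' - 1 by omega]
        have hli : lastIdx (Nat.fib (n+3) + j') = lastIdx j' := lastIdx_add_fib h1' h2'
        rw [hli]
        exact gs_letter n j' h1' (by omega)

lemma goldenLetter_eq {j : ℕ} (hj : 1 ≤ j) :
    goldenLetter j = decide (Even (lastIdx j)) := by
  rw [goldenLetter]
  refine gs_letter j j hj ?_
  rcases lt_or_ge j 5 with h | h
  · interval_cases j <;> decide
  · exact le_trans (Nat.le_fib_self h) (Nat.fib_mono (by omega))


def en (k j : ℕ) : ℕ := Nat.fib (2*k) + sigma (2*k) j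

lemma en_succ (k : ℕ) {j : ℕ} (hj : 1 ≤ j) :
    en k j = en k (j-1) + (if Even (lastIdx j) then Nat.fib (2*k+2) else Nat.fib (2*k+1)) := by
  rw [en, en, sigma_succ (2*k) hj, add_assoc]

lemma en_strictMono (k : ℕ) : StrictMono (en k) := by
  apply strictMono_nat_of_lt_succ
  intro j
  have h := en_succ k (j := j+1) (by omega)
  rw [Nat.add_sub_cancel] at h
  have hpos : 0 < (if Even (lastIdx (j+1)) then Nat.fib (2*k+2) else Nat.fib (2*k+1)) := by
    split <;> exact Nat.fib_pos.2 (by omega)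
  omega

lemma en_mem (k : ℕ) (hk : 1 ≤ k) (j : ℕ) : ZeckMin k (en k j) := by
  classical
  set l : List ℕ := ((Nat.zeckendorf j).map (· + 2*k)) ++ [2*k] with hl
  have hzp : (Nat.zeckendorf j).Pairwise (fun a b => b + 2 ≤ a) :=
    (pairwise_append.1 (zeck_pairwise j)).1
  have hpl : l.Pairwise (fun a b => b + 2 ≤ a) := by
    rw [hl, pairwise_append]
    refine ⟨?_, by simp, ?_⟩
    · rw [pairwise_map]
      exact hzp.imp (fun h => by omega)
    · intro x hx y hy
      simp only [mem_singleton] at hy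
      subst hy
      obtain ⟨a, ha, rfl⟩ := mem_map.1 hx
      have := zeck_two_le ha
      omega
  have hnd : l.Nodup := List.Pairwise.imp (fun h => by omega) hpl
  refine ⟨l.toFinset, ⟨?_, ?_, ?_⟩, ?_, ?_⟩
  · intro i hi
    rw [mem_toFinset, hl, mem_append] at hi
    rcases hi with hi | hi
    · obtain ⟨a, ha, rfl⟩ := mem_map.1 hi
      have := zeck_two_le ha
      omega
    · simp only [mem_singleton] at hi
      omega
  · intro i hi hi1
    rw [mem_toFinset] at hi hi1
    have hsym : Symmetric (fun a b : ℕ => a ≠ b + 1 ∧ b ≠ a + 1) := fun a b h => ⟨h.2, h.1⟩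
    have h2 := (haveI : Std.Symm (fun a b : ℕ => a ≠ b + 1 ∧ b ≠ a + 1) := ⟨fun a b h => hsym h⟩; List.Pairwise.forall
      (hpl.imp (fun {a b} (h : b + 2 ≤ a) => (⟨by omega, by omega⟩ : a ≠ b+1 ∧ b ≠ a+1))))
      hi hi1 (by omega)
    exact absurd rfl h2.2
  · rw [List.sum_toFinset _ hnd, hl, map_append, List.sum_append, map_map]
    simp only [en, sigma, Function.comp_def, map_cons, map_nil, List.sum_cons, List.sum_nil]
    omega
  · rw [mem_toFinset, hl]
    simp
  · intro i hi
    rw [mem_toFinset, hl, mem_append] at hi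
    rcases hi with hi | hi
    · obtain ⟨a, ha, rfl⟩ := mem_map.1 hi
      omega
    · simp only [mem_singleton] at hi
      omega

lemma en_surj (k : ℕ) (hk : 1 ≤ k) {n : ℕ} (h : ZeckMin k n) : ∃ j, en k j = n := by
  classical
  obtain ⟨s, ⟨hs2, hsadj, hsum⟩, hmem, hmin⟩ := h
  set l : List ℕ := (s.sort (· ≤ ·)).reverse with hldef
  have hmeml : ∀ {x : ℕ}, x ∈ l ↔ x ∈ s := by
    intro x
    rw [hldef, mem_reverse, Finset.mem_sort]
  have hsort : l.Pairwise (fun a b => b < a) := by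
    rw [hldef, pairwise_reverse]
    exact (Finset.sortedLT_sort s).pairwise
  have hpl : l.Pairwise (fun a b => b + 2 ≤ a) := by
    refine List.Pairwise.imp_of_mem ?_ hsort
    intro a b ha hb hab
    by_contra hcon
    have hba : a = b + 1 := by omega
    exact hsadj b (hmeml.1 hb) (hba ▸ hmeml.1 ha)
  have hsuml : (l.map Nat.fib).sum = n := by
    have hperm : l.Perm s.toList := by
      rw [hldef]
      exact ((s.sort (· ≤ ·)).reverse_perm).trans (Finset.sort_perm_toList s (· ≤ ·))
    rw [hsum, ← Finset.sum_map_toList]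
    exact (hperm.map Nat.fib).sum_eq
  obtain ⟨l₁, hl1⟩ : ∃ l₁, l = l₁ ++ [2*k] := by
    rcases l.eq_nil_or_concat with hnil | ⟨l₁, a, hconc⟩
    · exfalso
      have hx := hmeml.2 hmem
      rw [hnil] at hx
      simp at hx
    · rw [concat_eq_append] at hconc
      have ha : a = 2*k := by
        have hamem : a ∈ s := hmeml.1 (by rw [hconc]; simp)
        have h2ka : 2*k ≤ a := hmin a hamem
        have h2kl : (2*k) ∈ l := hmeml.2 hmem
        rw [hconc] at h2kl
        rcases mem_append.1 h2kl with hin | hin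
        · have hp := hpl
          rw [hconc] at hp
          have := (pairwise_append.1 hp).2.2 _ hin a (by simp)
          omega
        · simp only [mem_singleton] at hin
          omega
      exact ⟨l₁, by rw [hconc, ha]⟩
  have hl₁mem : ∀ x ∈ l₁, 2*k + 2 ≤ x := by
    intro x hx
    have := (pairwise_append.1 (hl1 ▸ hpl)).2.2 x hx (2*k) (by simp)
    omega
  set Z : List ℕ := l₁.map (· - 2*k) with hZ
  have hrep : Z.IsZeckendorfRep := by
    rw [List.IsZeckendorfRep, isChain_iff_pairwise, pairwise_append]
    refine ⟨?_, by simp, ?_⟩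
    · rw [hZ, pairwise_map]
      refine List.Pairwise.imp_of_mem ?_ ((pairwise_append.1 (hl1 ▸ hpl)).1)
      intro a b ha hb hab
      have := hl₁mem b hb
      omega
    · intro x hx y hy
      simp only [mem_singleton] at hy
      subst hy
      rw [hZ, mem_map] at hx
      obtain ⟨a, ha, rfl⟩ := hx
      have := hl₁mem a ha
      omega
  refine ⟨(Z.map Nat.fib).sum, ?_⟩
  have hzeck : Nat.zeckendorf ((Z.map Nat.fib).sum) = Z := Nat.zeckendorf_sum_fib hrep
  rw [en, sigma, hzeck, hZ, map_map]
  have hmapeq : l₁.map ((fun i => Nat.fib (i + 2*k)) ∘ (· - 2*k)) = l₁.map Nat.fib := by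
    apply List.map_congr_left
    intro a ha
    have := hl₁mem a ha
    simp only [Function.comp_apply]
    congr 1
    omega
  rw [hmapeq, ← hsuml, hl1, map_append, List.sum_append]
  simp [Nat.add_comm]

lemma nth_en (k : ℕ) (hk : 1 ≤ k) (i : ℕ) : Nat.nth (ZeckMin k) i = en k i := by
  classical
  have hcount : Nat.count (ZeckMin k) (en k i) = i := by
    rw [Nat.count_eq_card_filter_range]
    have himg : (Finset.range (en k i)).filter (ZeckMin k) = (Finset.range i).image (en k) := by
      ext m
      simp only [Finset.mem_filter, Finset.mem_range, Finset.mem_image]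
      constructor
      · rintro ⟨hlt, hm⟩
        obtain ⟨t, rfl⟩ := en_surj k hk hm
        exact ⟨t, (en_strictMono k).lt_iff_lt.1 hlt, rfl⟩
      · rintro ⟨t, ht, rfl⟩
        exact ⟨en_strictMono k ht, en_mem k hk t⟩
    rw [himg, Finset.card_image_of_injective _ (en_strictMono k).injective, Finset.card_range]
  have hn := Nat.nth_count (p := ZeckMin k) (en_mem k hk i)
  rw [hcount] at hn
  exact hn

end ZG

theorem zeck_gap (k : ℕ) (hk : 1 ≤ k) (j : ℕ) (hj : 1 ≤ j) :
    (goldenLetter j = false →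
        Nat.nth (ZeckMin k) (j + 1 - 1) - Nat.nth (ZeckMin k) (j - 1) =
          Nat.fib (2 * k + 1)) ∧
    (goldenLetter j = true →
        Nat.nth (ZeckMin k) (j + 1 - 1) - Nat.nth (ZeckMin k) (j - 1) =
          Nat.fib (2 * k + 2)) := by
  have hnth1 : Nat.nth (ZeckMin k) (j + 1 - 1) = ZG.en k j := by
    rw [show j + 1 - 1 = j by omega, ZG.nth_en k hk j]
  have hnth0 : Nat.nth (ZeckMin k) (j - 1) = ZG.en k (j-1) := ZG.nth_en k hk (j-1)
  have hsucc := ZG.en_succ k hj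
  have hgl : goldenLetter j = decide (Even (ZG.lastIdx j)) := ZG.goldenLetter_eq hj
  constructor <;> intro hLet <;> rw [hnth1, hnth0, hsucc] <;> rw [hgl] at hLet
  · have hodd : ¬ Even (ZG.lastIdx j) := by simpa using hLet
    rw [if_neg hodd]
    omega
  · have hev : Even (ZG.lastIdx j) := by simpa using hLet
    rw [if_pos hev]
    omega
end

section
/- Fix k ≥ 1 and let q(j) be the j-th smallest positive integer whose Chung-Graham decomposition has F_{2k} (with coefficient 1 or 2) as its smallest summand. Then for ℓ ≥ 1: (a) for F_{2ℓ+1} + 1 ≤ j ≤ 2F_{2ℓ+1}, q(j) = q(j − F_{2ℓ+1}) + F_{2k+2ℓ}; (b) for 2F_{2ℓ+1} + 1 ≤ j ≤ F_{2ℓ+3}, q(j) = q(j − 2F_{2ℓ+1}) + 2F_{2k+2ℓ}. -/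
namespace CGAux

/-- The value of a coefficient function. -/
def val (c : ℕ →₀ ℕ) : ℕ := c.sum fun i v => v * Nat.fib (2 * i)

lemma val_erase (c : ℕ →₀ ℕ) (a : ℕ) :
    val c = c a * Nat.fib (2 * a) + val (c.erase a) := by
  conv_lhs => rw [val, ← Finsupp.single_add_erase a c]
  rw [Finsupp.sum_add_index' (h := fun i v => v * Nat.fib (2 * i))
      (fun _ => zero_mul _) (fun _ b₁ b₂ => add_mul b₁ b₂ _),
    Finsupp.sum_single_index (h := fun i v => v * Nat.fib (2 * i)) (zero_mul _)]
  rfl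

lemma val_add_single (c : ℕ →₀ ℕ) (a v : ℕ) :
    val (c + Finsupp.single a v) = val c + v * Nat.fib (2 * a) := by
  rw [val, Finsupp.sum_add_index' (h := fun i v => v * Nat.fib (2 * i))
      (fun _ => zero_mul _) (fun _ b₁ b₂ => add_mul b₁ b₂ _),
    Finsupp.sum_single_index (h := fun i v => v * Nat.fib (2 * i)) (zero_mul _)]
  rfl

lemma le_val (c : ℕ →₀ ℕ) (a : ℕ) : c a * Nat.fib (2 * a) ≤ val c := by
  rw [val_erase c a]; exact Nat.le_add_right _ _

lemma val_zero_eq (c : ℕ →₀ ℕ) (h : ∀ i, c i = 0) : val c = 0 := by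
  have : c = 0 := Finsupp.ext fun i => h i
  rw [this, val, Finsupp.sum_zero_index]

lemma cg_support_lt {n : ℕ} {c : ℕ →₀ ℕ} (h : IsCG n c) {r : ℕ}
    (hn : n < Nat.fib (2 * r)) : ∀ i, r ≤ i → c i = 0 := by
  intro i hi
  by_contra hne
  have h1 : Nat.fib (2 * i) ≤ c i * Nat.fib (2 * i) :=
    Nat.le_mul_of_pos_left _ (Nat.pos_of_ne_zero hne)
  have h2 := le_val c i
  have h3 : Nat.fib (2 * r) ≤ Nat.fib (2 * i) := Nat.fib_mono (by omega)
  have h4 : n = val c := h.2.2.2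
  omega

end CGAux
namespace CGAux

lemma cg_bound : ∀ r : ℕ, 1 ≤ r → ∀ c : ℕ →₀ ℕ, (∀ i, c i ≤ 2) → c 0 = 0 →
    (∀ i₁ i₂, i₁ < i₂ → c i₁ = 2 → c i₂ = 2 → ∃ j, i₁ < j ∧ j < i₂ ∧ c j = 0) →
    (∀ i, r ≤ i → c i = 0) →
    (val c < Nat.fib (2 * r) ∧
      ((∀ i, c i = 2 → ∃ j, i < j ∧ j < r ∧ c j = 0) → val c < Nat.fib (2 * r - 1))) := by
  intro r hr
  induction r, hr using Nat.le_induction with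
  | base =>
    intro c _ h0 _ hs
    have hval : val c = 0 := val_zero_eq c (fun i => by
      rcases Nat.eq_zero_or_pos i with h | h
      · rw [h]; exact h0
      · exact hs i h)
    refine ⟨by rw [hval]; simp, fun _ => by rw [hval]; simp⟩
  | succ r hr IH =>
    intro c hle h0 hpair hs
    obtain ⟨s, rfl⟩ : ∃ s, r = s + 1 := ⟨r - 1, by omega⟩
    set d := c.erase (s+1) with hd
    have hdapp : ∀ i, d i = if i = s+1 then 0 else c i := by
      intro i; by_cases h : i = s+1
      · rw [if_pos h, h, hd]; exact Finsupp.erase_same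
      · rw [if_neg h, hd]; exact Finsupp.erase_ne h
    have hdle : ∀ i, d i ≤ 2 := fun i => by
      rw [hdapp i]; split
      · omega
      · exact hle i
    have hd0 : d 0 = 0 := by rw [hdapp 0, if_neg (by omega)]; exact h0
    have hdpair : ∀ i₁ i₂, i₁ < i₂ → d i₁ = 2 → d i₂ = 2 → ∃ j, i₁ < j ∧ j < i₂ ∧ d j = 0 := by
      intro i₁ i₂ hlt h1 h2
      rw [hdapp i₁] at h1; rw [hdapp i₂] at h2
      by_cases e1 : i₁ = s+1
      · rw [if_pos e1] at h1; omega
      by_cases e2 : i₂ = s+1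
      · rw [if_pos e2] at h2; omega
      rw [if_neg e1] at h1; rw [if_neg e2] at h2
      obtain ⟨j, hj1, hj2, hj0⟩ := hpair i₁ i₂ hlt h1 h2
      refine ⟨j, hj1, hj2, ?_⟩
      rw [hdapp j]; split
      · rfl
      · exact hj0
    have hds : ∀ i, s+1 ≤ i → d i = 0 := fun i hi => by
      rw [hdapp i]; split
      · rfl
      · exact hs i (by omega)
    obtain ⟨IH1, IH2⟩ := IH d hdle hd0 hdpair hds
    have hsplit : val c = c (s+1) * Nat.fib (2*(s+1)) + val d := val_erase c (s+1)
    have f1 : Nat.fib (2*s+3) = Nat.fib (2*s+1) + Nat.fib (2*s+2) := Nat.fib_add_two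
    have f2 : Nat.fib (2*s+4) = Nat.fib (2*s+2) + Nat.fib (2*s+3) := Nat.fib_add_two
    have f0 : Nat.fib (2*s+1) ≤ Nat.fib (2*s+2) := Nat.fib_le_fib_succ
    rw [show 2*(s+1) = 2*s+2 by ring] at IH1 hsplit
    rw [show 2*(s+1)-1 = 2*s+1 by omega] at IH2
    rw [show 2*(s+1+1) = 2*s+4 by ring, show 2*s+4-1 = 2*s+3 by omega]
    have hc2 := hle (s+1)
    have hdap1 : c (s+1) = 2 → ∀ i, d i = 2 → ∃ j, i < j ∧ j < s+1 ∧ d j = 0 := by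
      intro h i h2i
      have hne : i ≠ s+1 := by
        intro e; rw [hdapp i, if_pos e] at h2i; omega
      have hci : c i = 2 := by rw [hdapp i, if_neg hne] at h2i; exact h2i
      have hilt : i < s+1 := by
        by_contra hge
        push_neg at hge
        have : c i = 0 := hs i (by omega)
        omega
      obtain ⟨j, hj1, hj2, hj0⟩ := hpair i (s+1) hilt hci h
      exact ⟨j, hj1, hj2, by rw [hdapp j, if_neg (by omega)]; exact hj0⟩
    constructor
    · rcases (by omega : c (s+1) = 0 ∨ c (s+1) = 1 ∨ c (s+1) = 2) with h | h | h
      · rw [h] at hsplit; simp at hsplit; omega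
      · rw [h, one_mul] at hsplit; omega
      · have := IH2 (hdap1 h)
        rw [h] at hsplit
        omega
    · intro hap
      rcases (by omega : c (s+1) = 0 ∨ c (s+1) = 1 ∨ c (s+1) = 2) with h | h | h
      · rw [h] at hsplit; simp at hsplit; omega
      · have hdap : ∀ i, d i = 2 → ∃ j, i < j ∧ j < s+1 ∧ d j = 0 := by
          intro i h2i
          have hne : i ≠ s+1 := by
            intro e; rw [hdapp i, if_pos e] at h2i; omega
          have hci : c i = 2 := by rw [hdapp i, if_neg hne] at h2i; exact h2i
          obtain ⟨j, hj1, hj2, hj0⟩ := hap i hci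
          have hjne : j ≠ s+1 := by intro e; rw [e] at hj0; omega
          exact ⟨j, hj1, by omega, by rw [hdapp j, if_neg hjne]; exact hj0⟩
        have := IH2 hdap
        rw [h, one_mul] at hsplit
        omega
      · obtain ⟨j, hj1, hj2, _⟩ := hap (s+1) h
        omega

end CGAux
namespace CGAux

lemma two_fib_add_sum (i : ℕ) (hi : 1 ≤ i) :
    ∀ d : ℕ, Nat.fib (2*(i+1+d) - 1) ≤
      2 * Nat.fib (2*i) + ∑ j ∈ Finset.Ico (i+1) (i+1+d), Nat.fib (2*j) := by
  intro d
  induction d with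
  | zero =>
    obtain ⟨u, rfl⟩ : ∃ u, i = u + 1 := ⟨i - 1, by omega⟩
    simp only [Nat.add_zero, Finset.Ico_self, Finset.sum_empty]
    have f1 : Nat.fib (2*u+3) = Nat.fib (2*u+1) + Nat.fib (2*u+2) := Nat.fib_add_two
    have f0 : Nat.fib (2*u+1) ≤ Nat.fib (2*u+2) := Nat.fib_le_fib_succ
    rw [show 2*(u+1+1)-1 = 2*u+3 by omega, show 2*(u+1) = 2*u+2 by ring]
    omega
  | succ d IH =>
    rw [show i+1+(d+1) = (i+1+d)+1 by ring, Finset.sum_Ico_succ_top (by omega)]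
    have f1 : Nat.fib (2*i+2*d+3) = Nat.fib (2*i+2*d+1) + Nat.fib (2*i+2*d+2) := Nat.fib_add_two
    rw [show 2*(i+1+d)-1 = 2*i+2*d+1 by omega] at IH
    rw [show 2*((i+1+d)+1)-1 = 2*i+2*d+3 by omega, show 2*(i+1+d) = 2*i+2*d+2 by ring]
    omega

lemma lb_of_not_appendable {n : ℕ} {c : ℕ →₀ ℕ} (h : IsCG n c) {i r : ℕ}
    (hi : c i = 2) (hir : i < r)
    (hall : ∀ j, i < j → j < r → c j ≠ 0) : Nat.fib (2*r - 1) ≤ n := by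
  have hi1 : 1 ≤ i := by
    rcases Nat.eq_zero_or_pos i with h0 | h0
    · exfalso; rw [h0] at hi; have := h.2.1; omega
    · exact h0
  have hsub : insert i (Finset.Ico (i+1) r) ⊆ c.support := by
    intro j hj
    rcases Finset.mem_insert.mp hj with rfl | hj
    · exact Finsupp.mem_support_iff.mpr (by omega)
    · rw [Finset.mem_Ico] at hj
      exact Finsupp.mem_support_iff.mpr (hall j hj.1 hj.2)
  have h1 : ∑ j ∈ insert i (Finset.Ico (i+1) r), c j * Nat.fib (2*j) ≤ val c := by
    rw [val, Finsupp.sum]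
    exact Finset.sum_le_sum_of_subset hsub
  rw [Finset.sum_insert (by simp)] at h1
  have h2 : ∑ j ∈ Finset.Ico (i+1) r, Nat.fib (2*j) ≤
      ∑ j ∈ Finset.Ico (i+1) r, c j * Nat.fib (2*j) := by
    apply Finset.sum_le_sum
    intro j hj
    rw [Finset.mem_Ico] at hj
    exact Nat.le_mul_of_pos_left _ (Nat.pos_of_ne_zero (hall j hj.1 hj.2))
  obtain ⟨d, rfl⟩ : ∃ d, r = i+1+d := ⟨r - (i+1), by omega⟩
  have h3 := two_fib_add_sum i hi1 d
  have hv : n = val c := h.2.2.2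
  rw [hi] at h1
  omega

end CGAux
namespace CGAux

lemma shift1 (k t : ℕ) (hk : 1 ≤ k) (ht : 1 ≤ t) (m : ℕ) (hm : m < Nat.fib (2*k+2*t)) :
    CGMin k (Nat.fib (2*k+2*t) + m) ↔ CGMin k m := by
  have f2 : Nat.fib (2*k+2*t+2) = Nat.fib (2*k+2*t) + Nat.fib (2*k+2*t+1) := Nat.fib_add_two
  have f0 : Nat.fib (2*k+2*t) ≤ Nat.fib (2*k+2*t+1) := Nat.fib_le_fib_succ
  constructor
  · rintro ⟨c, hcg, hck, hlow⟩
    obtain ⟨hle, h0, hpair, hval⟩ := hcg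
    have hval' : Nat.fib (2*k+2*t) + m = val c := hval
    have hsupp : ∀ i, k+t+1 ≤ i → c i = 0 := by
      apply cg_support_lt ⟨hle, h0, hpair, hval⟩ (r := k+t+1)
      rw [show 2*(k+t+1) = 2*k+2*t+2 by ring]
      omega
    set d := c.erase (k+t) with hd
    have hdapp : ∀ i, d i = if i = k+t then 0 else c i := by
      intro i; by_cases h : i = k+t
      · rw [if_pos h, h, hd]; exact Finsupp.erase_same
      · rw [if_neg h, hd]; exact Finsupp.erase_ne h
    have hdle : ∀ i, d i ≤ 2 := fun i => by
      rw [hdapp i]; split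
      · omega
      · exact hle i
    have hd0 : d 0 = 0 := by rw [hdapp 0, if_neg (by omega)]; exact h0
    have hdpair : ∀ i₁ i₂, i₁ < i₂ → d i₁ = 2 → d i₂ = 2 → ∃ j, i₁ < j ∧ j < i₂ ∧ d j = 0 := by
      intro i₁ i₂ hlt h1 h2
      rw [hdapp i₁] at h1; rw [hdapp i₂] at h2
      by_cases e1 : i₁ = k+t
      · rw [if_pos e1] at h1; omega
      by_cases e2 : i₂ = k+t
      · rw [if_pos e2] at h2; omega
      rw [if_neg e1] at h1; rw [if_neg e2] at h2
      obtain ⟨j, hj1, hj2, hj0⟩ := hpair i₁ i₂ hlt h1 h2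
      refine ⟨j, hj1, hj2, ?_⟩
      rw [hdapp j]; split
      · rfl
      · exact hj0
    have hds : ∀ i, k+t ≤ i → d i = 0 := fun i hi => by
      rw [hdapp i]; split
      · rfl
      · exact hsupp i (by omega)
    have hdbound : val d < Nat.fib (2*k+2*t) := by
      have := (cg_bound (k+t) (by omega) d hdle hd0 hdpair hds).1
      rwa [show 2*(k+t) = 2*k+2*t by ring] at this
    have hsplit : val c = c (k+t) * Nat.fib (2*(k+t)) + val d := val_erase c (k+t)
    rw [show 2*(k+t) = 2*k+2*t by ring] at hsplit
    have hc2 := hle (k+t)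
    have hckt : c (k+t) = 1 := by
      rcases (by omega : c (k+t) = 0 ∨ c (k+t) = 1 ∨ c (k+t) = 2) with h | h | h
      · rw [h] at hsplit; simp at hsplit; omega
      · exact h
      · rw [h] at hsplit; omega
    rw [hckt, one_mul] at hsplit
    refine ⟨d, ⟨hdle, hd0, hdpair, show m = val d by omega⟩, ?_, ?_⟩
    · rw [hdapp k, if_neg (by omega)]; exact hck
    · intro i hi; rw [hdapp i, if_neg (by omega)]; exact hlow i hi
  · rintro ⟨c, hcg, hck, hlow⟩
    obtain ⟨hle, h0, hpair, hval⟩ := hcg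
    have hval' : m = val c := hval
    have hsupp : ∀ i, k+t ≤ i → c i = 0 := by
      apply cg_support_lt ⟨hle, h0, hpair, hval⟩ (r := k+t)
      rw [show 2*(k+t) = 2*k+2*t by ring]
      omega
    set c' := c + Finsupp.single (k+t) 1 with hc'
    have happ : ∀ i, c' i = if i = k+t then 1 else c i := by
      intro i
      by_cases h : i = k+t
      · rw [if_pos h, h, hc', Finsupp.add_apply, Finsupp.single_eq_same,
          hsupp (k+t) le_rfl]
      · rw [if_neg h, hc', Finsupp.add_apply, Finsupp.single_apply,
          if_neg (fun e => h e.symm), add_zero]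
    refine ⟨c', ⟨?_, ?_, ?_, ?_⟩, ?_, ?_⟩
    · intro i; rw [happ i]; split
      · omega
      · exact hle i
    · rw [happ 0, if_neg (by omega)]; exact h0
    · intro i₁ i₂ hlt h1 h2
      rw [happ i₁] at h1; rw [happ i₂] at h2
      by_cases e1 : i₁ = k+t
      · rw [if_pos e1] at h1; omega
      by_cases e2 : i₂ = k+t
      · rw [if_pos e2] at h2; omega
      rw [if_neg e1] at h1; rw [if_neg e2] at h2
      have hi2 : i₂ < k+t := by
        by_contra hge; push_neg at hge
        rw [hsupp i₂ hge] at h2; omega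
      obtain ⟨j, hj1, hj2, hj0⟩ := hpair i₁ i₂ hlt h1 h2
      exact ⟨j, hj1, hj2, by rw [happ j, if_neg (by omega)]; exact hj0⟩
    · have : val c' = val c + 1 * Nat.fib (2*(k+t)) := val_add_single c (k+t) 1
      rw [show 2*(k+t) = 2*k+2*t by ring, one_mul] at this
      show Nat.fib (2*k+2*t) + m = val c'
      omega
    · rw [happ k, if_neg (by omega)]; exact hck
    · intro i hi; rw [happ i, if_neg (by omega)]; exact hlow i hi

end CGAux
namespace CGAux

lemma shift2 (k t : ℕ) (hk : 1 ≤ k) (ht : 1 ≤ t) (m : ℕ) (hm : m < Nat.fib (2*k+2*t-1)) :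
    CGMin k (2 * Nat.fib (2*k+2*t) + m) ↔ CGMin k m := by
  have f2 : Nat.fib (2*k+2*t+2) = Nat.fib (2*k+2*t) + Nat.fib (2*k+2*t+1) := Nat.fib_add_two
  have f3 : Nat.fib (2*k+2*t+1) = Nat.fib (2*k+2*t-1) + Nat.fib (2*k+2*t) := by
    have := Nat.fib_add_two (n := 2*k+2*t-1)
    rwa [show 2*k+2*t-1+2 = 2*k+2*t+1 by omega, show 2*k+2*t-1+1 = 2*k+2*t by omega] at this
  have f4 : Nat.fib (2*k+2*t-1) ≤ Nat.fib (2*k+2*t) := Nat.fib_mono (by omega)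
  constructor
  · rintro ⟨c, hcg, hck, hlow⟩
    obtain ⟨hle, h0, hpair, hval⟩ := hcg
    have hval' : 2 * Nat.fib (2*k+2*t) + m = val c := hval
    have hsupp : ∀ i, k+t+1 ≤ i → c i = 0 := by
      apply cg_support_lt ⟨hle, h0, hpair, hval⟩ (r := k+t+1)
      rw [show 2*(k+t+1) = 2*k+2*t+2 by ring]
      omega
    set d := c.erase (k+t) with hd
    have hdapp : ∀ i, d i = if i = k+t then 0 else c i := by
      intro i; by_cases h : i = k+t
      · rw [if_pos h, h, hd]; exact Finsupp.erase_same
      · rw [if_neg h, hd]; exact Finsupp.erase_ne h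
    have hdle : ∀ i, d i ≤ 2 := fun i => by
      rw [hdapp i]; split
      · omega
      · exact hle i
    have hd0 : d 0 = 0 := by rw [hdapp 0, if_neg (by omega)]; exact h0
    have hdpair : ∀ i₁ i₂, i₁ < i₂ → d i₁ = 2 → d i₂ = 2 → ∃ j, i₁ < j ∧ j < i₂ ∧ d j = 0 := by
      intro i₁ i₂ hlt h1 h2
      rw [hdapp i₁] at h1; rw [hdapp i₂] at h2
      by_cases e1 : i₁ = k+t
      · rw [if_pos e1] at h1; omega
      by_cases e2 : i₂ = k+t
      · rw [if_pos e2] at h2; omega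
      rw [if_neg e1] at h1; rw [if_neg e2] at h2
      obtain ⟨j, hj1, hj2, hj0⟩ := hpair i₁ i₂ hlt h1 h2
      refine ⟨j, hj1, hj2, ?_⟩
      rw [hdapp j]; split
      · rfl
      · exact hj0
    have hds : ∀ i, k+t ≤ i → d i = 0 := fun i hi => by
      rw [hdapp i]; split
      · rfl
      · exact hsupp i (by omega)
    have hdbound : val d < Nat.fib (2*k+2*t) := by
      have := (cg_bound (k+t) (by omega) d hdle hd0 hdpair hds).1
      rwa [show 2*(k+t) = 2*k+2*t by ring] at this
    have hsplit : val c = c (k+t) * Nat.fib (2*(k+t)) + val d := val_erase c (k+t)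
    rw [show 2*(k+t) = 2*k+2*t by ring] at hsplit
    have hc2 := hle (k+t)
    have hckt : c (k+t) = 2 := by
      rcases (by omega : c (k+t) = 0 ∨ c (k+t) = 1 ∨ c (k+t) = 2) with h | h | h
      · rw [h] at hsplit; simp at hsplit; omega
      · rw [h, one_mul] at hsplit; omega
      · exact h
    rw [hckt] at hsplit
    refine ⟨d, ⟨hdle, hd0, hdpair, show m = val d by omega⟩, ?_, ?_⟩
    · rw [hdapp k, if_neg (by omega)]; exact hck
    · intro i hi; rw [hdapp i, if_neg (by omega)]; exact hlow i hi
  · rintro ⟨c, hcg, hck, hlow⟩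
    obtain ⟨hle, h0, hpair, hval⟩ := hcg
    have hval' : m = val c := hval
    have hsupp : ∀ i, k+t ≤ i → c i = 0 := by
      apply cg_support_lt ⟨hle, h0, hpair, hval⟩ (r := k+t)
      rw [show 2*(k+t) = 2*k+2*t by ring]
      omega
    have hap : ∀ i, c i = 2 → ∃ j, i < j ∧ j < k+t ∧ c j = 0 := by
      intro i h2
      by_contra hno
      push_neg at hno
      have hilt : i < k+t := by
        by_contra hge; push_neg at hge
        rw [hsupp i hge] at h2; omega
      have hno' : ∀ j, i < j → j < k+t → c j ≠ 0 := fun j hj1 hj2 => (hno j hj1 hj2)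
      have := lb_of_not_appendable ⟨hle, h0, hpair, hval⟩ h2 hilt hno'
      rw [show 2*(k+t)-1 = 2*k+2*t-1 by omega] at this
      omega
    set c' := c + Finsupp.single (k+t) 2 with hc'
    have happ : ∀ i, c' i = if i = k+t then 2 else c i := by
      intro i
      by_cases h : i = k+t
      · rw [if_pos h, h, hc', Finsupp.add_apply, Finsupp.single_eq_same,
          hsupp (k+t) le_rfl]
      · rw [if_neg h, hc', Finsupp.add_apply, Finsupp.single_apply,
          if_neg (fun e => h e.symm), add_zero]
    refine ⟨c', ⟨?_, ?_, ?_, ?_⟩, ?_, ?_⟩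
    · intro i; rw [happ i]; split
      · omega
      · exact hle i
    · rw [happ 0, if_neg (by omega)]; exact h0
    · intro i₁ i₂ hlt h1 h2
      rw [happ i₁] at h1; rw [happ i₂] at h2
      by_cases e2 : i₂ = k+t
      · rw [if_pos e2] at h2
        by_cases e1 : i₁ = k+t
        · omega
        rw [if_neg e1] at h1
        obtain ⟨j, hj1, hj2, hj0⟩ := hap i₁ h1
        exact ⟨j, hj1, by omega, by rw [happ j, if_neg (by omega)]; exact hj0⟩
      by_cases e1 : i₁ = k+t
      · rw [if_neg e2] at h2
        have : i₂ < k+t := by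
          by_contra hge; push_neg at hge
          rw [hsupp i₂ hge] at h2; omega
        omega
      rw [if_neg e1] at h1; rw [if_neg e2] at h2
      have hi2 : i₂ < k+t := by
        by_contra hge; push_neg at hge
        rw [hsupp i₂ hge] at h2; omega
      obtain ⟨j, hj1, hj2, hj0⟩ := hpair i₁ i₂ hlt h1 h2
      exact ⟨j, hj1, hj2, by rw [happ j, if_neg (by omega)]; exact hj0⟩
    · have : val c' = val c + 2 * Nat.fib (2*(k+t)) := val_add_single c (k+t) 2
      rw [show 2*(k+t) = 2*k+2*t by ring] at this
      show 2 * Nat.fib (2*k+2*t) + m = val c'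
      omega
    · rw [happ k, if_neg (by omega)]; exact hck
    · intro i hi; rw [happ i, if_neg (by omega)]; exact hlow i hi

end CGAux
namespace CGAux

lemma cgmin_fib {k : ℕ} (hk : 1 ≤ k) : CGMin k (Nat.fib (2*k)) := by
  refine ⟨Finsupp.single k 1, ⟨?_, ?_, ?_, ?_⟩, ?_, ?_⟩
  · intro i; rw [Finsupp.single_apply]; split <;> omega
  · rw [Finsupp.single_apply, if_neg (by omega)]
  · intro i₁ i₂ _ h1 _
    rw [Finsupp.single_apply] at h1
    exfalso; split at h1 <;> omega
  · show Nat.fib (2*k) = val (Finsupp.single k 1)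
    rw [val, Finsupp.sum_single_index (h := fun i v => v * Nat.fib (2 * i)) (zero_mul _),
      one_mul]
  · rw [Finsupp.single_eq_same]
  · intro i hi; rw [Finsupp.single_apply, if_neg (by omega)]

lemma cgmin_two_fib {k : ℕ} (hk : 1 ≤ k) : CGMin k (2 * Nat.fib (2*k)) := by
  refine ⟨Finsupp.single k 2, ⟨?_, ?_, ?_, ?_⟩, ?_, ?_⟩
  · intro i; rw [Finsupp.single_apply]; split <;> omega
  · rw [Finsupp.single_apply, if_neg (by omega)]
  · intro i₁ i₂ hlt h1 h2
    rw [Finsupp.single_apply] at h1 h2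
    exfalso
    split at h1
    · split at h2 <;> omega
    · omega
  · show 2 * Nat.fib (2*k) = val (Finsupp.single k 2)
    rw [val, Finsupp.sum_single_index (h := fun i v => v * Nat.fib (2 * i)) (zero_mul _)]
  · rw [Finsupp.single_eq_same]; omega
  · intro i hi; rw [Finsupp.single_apply, if_neg (by omega)]

lemma cgmin_ge {k m : ℕ} (h : CGMin k m) : Nat.fib (2*k) ≤ m := by
  obtain ⟨c, hcg, hck, _⟩ := h
  have h1 : Nat.fib (2*k) ≤ c k * Nat.fib (2*k) := Nat.le_mul_of_pos_left _ (by omega)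
  have h2 := le_val c k
  have h3 : m = val c := hcg.2.2.2
  omega

lemma cgmin_small {k : ℕ} (hk : 1 ≤ k) {m : ℕ} (hm : m < Nat.fib (2*k+2)) (h : CGMin k m) :
    m = Nat.fib (2*k) ∨ m = 2 * Nat.fib (2*k) := by
  obtain ⟨c, ⟨hle, h0, hpair, hval⟩, hck, hlow⟩ := h
  have hval' : m = val c := hval
  have hsupp : ∀ i, k+1 ≤ i → c i = 0 := by
    apply cg_support_lt ⟨hle, h0, hpair, hval⟩ (r := k+1)
    rwa [show 2*(k+1) = 2*k+2 by ring]
  have hz : val (c.erase k) = 0 := by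
    apply val_zero_eq
    intro i
    by_cases hik : i = k
    · rw [hik]; exact Finsupp.erase_same
    · rw [Finsupp.erase_ne hik]
      rcases Nat.lt_or_ge i k with h | h
      · exact hlow i h
      · exact hsupp i (by omega)
  have hsplit := val_erase c k
  rw [hz, add_zero] at hsplit
  have hc2 := hle k
  rcases (by omega : c k = 1 ∨ c k = 2) with h | h
  · left; rw [hval', hsplit, h, one_mul]
  · right; rw [hval', hsplit, h]

lemma count_translate {p : ℕ → Prop} [DecidablePred p] (F N : ℕ)
    (h : ∀ m, m < N → (p (F + m) ↔ p m)) :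
    ∀ n, n ≤ N → Nat.count p (F + n) = Nat.count p F + Nat.count p n := by
  intro n
  induction n with
  | zero => simp
  | succ n IH =>
    intro hn
    rw [show F + (n+1) = (F+n) + 1 from rfl, Nat.count_succ, Nat.count_succ,
      IH (by omega)]
    have hiff := h n (by omega)
    by_cases hp : p n
    · rw [if_pos hp, if_pos (hiff.mpr hp)]; omega
    · rw [if_neg hp, if_neg (fun hx => hp (hiff.mp hx))]; omega

end CGAux
namespace CGAux

variable {k : ℕ} [DecidablePred (CGMin k)]

lemma count_fib0 (hk : 1 ≤ k) : Nat.count (CGMin k) (Nat.fib (2*k)) = 0 := by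
  rw [Nat.count_eq_card_filter_range, Finset.card_eq_zero, Finset.filter_eq_empty_iff]
  intro x hx
  rw [Finset.mem_range] at hx
  intro hp
  have := cgmin_ge hp
  omega

lemma count_fib1 (hk : 1 ≤ k) : Nat.count (CGMin k) (Nat.fib (2*k+1)) = 1 := by
  have f1 : Nat.fib (2*k+1) = Nat.fib (2*k-1) + Nat.fib (2*k) := by
    have := Nat.fib_add_two (n := 2*k-1)
    rwa [show 2*k-1+2 = 2*k+1 by omega, show 2*k-1+1 = 2*k by omega] at this
  have f0 : Nat.fib (2*k-1) ≤ Nat.fib (2*k) := Nat.fib_mono (by omega)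
  have fpos : 0 < Nat.fib (2*k-1) := Nat.fib_pos.mpr (by omega)
  have f2 : Nat.fib (2*k+1) ≤ Nat.fib (2*k+2) := Nat.fib_le_fib_succ
  rw [Nat.count_eq_card_filter_range]
  have : Finset.filter (CGMin k) (Finset.range (Nat.fib (2*k+1))) = {Nat.fib (2*k)} := by
    apply Finset.ext
    intro x
    rw [Finset.mem_filter, Finset.mem_range, Finset.mem_singleton]
    constructor
    · rintro ⟨hx, hp⟩
      rcases cgmin_small hk (by omega) hp with h | h
      · exact h
      · omega
    · rintro rfl
      exact ⟨by omega, cgmin_fib hk⟩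
  rw [this, Finset.card_singleton]

lemma count_fib2 (hk : 1 ≤ k) : Nat.count (CGMin k) (Nat.fib (2*k+2)) = 2 := by
  have f1 : Nat.fib (2*k+2) = Nat.fib (2*k) + Nat.fib (2*k+1) := Nat.fib_add_two
  have f0 : Nat.fib (2*k) < Nat.fib (2*k+1) := Nat.fib_lt_fib_succ (by omega)
  have fpos : 0 < Nat.fib (2*k) := Nat.fib_pos.mpr (by omega)
  rw [Nat.count_eq_card_filter_range]
  have : Finset.filter (CGMin k) (Finset.range (Nat.fib (2*k+2)))
      = {Nat.fib (2*k), 2 * Nat.fib (2*k)} := by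
    apply Finset.ext
    intro x
    rw [Finset.mem_filter, Finset.mem_range, Finset.mem_insert, Finset.mem_singleton]
    constructor
    · rintro ⟨hx, hp⟩
      exact cgmin_small hk hx hp
    · rintro (rfl | rfl)
      · exact ⟨by omega, cgmin_fib hk⟩
      · exact ⟨by omega, cgmin_two_fib hk⟩
  rw [this, Finset.card_pair (by omega)]

lemma count_fib_triple (hk : 1 ≤ k) : ∀ t, 1 ≤ t →
    Nat.count (CGMin k) (Nat.fib (2*k+2*t-1)) = Nat.fib (2*t) ∧
    Nat.count (CGMin k) (Nat.fib (2*k+2*t)) = Nat.fib (2*t+1) ∧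
    Nat.count (CGMin k) (Nat.fib (2*k+2*t+1)) = Nat.fib (2*t+2) := by
  intro t ht
  induction t, ht using Nat.le_induction with
  | base =>
    rw [show 2*k+2*1-1 = 2*k+1 by omega, show 2*k+2*1 = 2*k+2 by ring,
      show 2*k+2*1+1 = 2*k+3 by ring, show (2*1 : ℕ) = 2 by norm_num,
      show (2*1+1 : ℕ) = 3 by norm_num, show (2*1+2 : ℕ) = 4 by norm_num]
    refine ⟨by rw [count_fib1 hk]; rfl, by rw [count_fib2 hk]; rfl, ?_⟩
    have f1 : Nat.fib (2*k+3) = Nat.fib (2*k+1) + Nat.fib (2*k+2) := Nat.fib_add_two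
    have f0 : Nat.fib (2*k+1) ≤ Nat.fib (2*k+2) := Nat.fib_le_fib_succ
    have hD1 := count_translate (Nat.fib (2*k+2)) (Nat.fib (2*k+2))
      (fun m hm => by
        have := shift1 k 1 hk le_rfl m (by rwa [show 2*k+2*1 = 2*k+2 by ring])
        rwa [show 2*k+2*1 = 2*k+2 by ring] at this)
      (Nat.fib (2*k+1)) f0
    rw [show Nat.fib (2*k+2) + Nat.fib (2*k+1) = Nat.fib (2*k+3) by omega] at hD1
    rw [hD1, count_fib1 hk, count_fib2 hk]
    rfl
  | succ t ht IH =>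
    obtain ⟨IH1, IH2, IH3⟩ := IH
    have e1 : 2*k+2*(t+1)-1 = 2*k+2*t+1 := by omega
    have e2 : 2*k+2*(t+1) = 2*k+2*t+2 := by ring
    have e3 : 2*k+2*(t+1)+1 = 2*k+2*t+3 := by ring
    have g1 : 2*(t+1) = 2*t+2 := by ring
    have g2 : 2*(t+1)+1 = 2*t+3 := by ring
    have g3 : 2*(t+1)+2 = 2*t+4 := by ring
    rw [e1, e2, g1]
    rw [show 2*k+2*t+2+1 = 2*k+2*t+3 by omega, show 2*t+2+1 = 2*t+3 by omega,
      show 2*t+2+2 = 2*t+4 by omega]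
    -- fib identities (big side)
    have F1 : Nat.fib (2*k+2*t+1) = Nat.fib (2*k+2*t-1) + Nat.fib (2*k+2*t) := by
      have := Nat.fib_add_two (n := 2*k+2*t-1)
      rwa [show 2*k+2*t-1+2 = 2*k+2*t+1 by omega, show 2*k+2*t-1+1 = 2*k+2*t by omega] at this
    have F2 : Nat.fib (2*k+2*t+2) = Nat.fib (2*k+2*t) + Nat.fib (2*k+2*t+1) := Nat.fib_add_two
    have F3 : Nat.fib (2*k+2*t+3) = Nat.fib (2*k+2*t+1) + Nat.fib (2*k+2*t+2) := Nat.fib_add_two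
    -- fib identities (small side)
    have G1 : Nat.fib (2*t+2) = Nat.fib (2*t) + Nat.fib (2*t+1) := Nat.fib_add_two
    have G2 : Nat.fib (2*t+3) = Nat.fib (2*t+1) + Nat.fib (2*t+2) := Nat.fib_add_two
    have G3 : Nat.fib (2*t+4) = Nat.fib (2*t+2) + Nat.fib (2*t+3) := Nat.fib_add_two
    refine ⟨IH3, ?_, ?_⟩
    · -- count at fib(2k+2t+2) = 2*fib(2k+2t) + fib(2k+2t-1)
      have hD1 := count_translate (Nat.fib (2*k+2*t)) (Nat.fib (2*k+2*t))
        (fun m hm => shift1 k t hk ht m hm) (Nat.fib (2*k+2*t)) le_rfl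
      have hD2 := count_translate (2 * Nat.fib (2*k+2*t)) (Nat.fib (2*k+2*t-1))
        (fun m hm => shift2 k t hk ht m hm) (Nat.fib (2*k+2*t-1)) le_rfl
      rw [show Nat.fib (2*k+2*t) + Nat.fib (2*k+2*t) = 2 * Nat.fib (2*k+2*t) by ring] at hD1
      rw [show 2 * Nat.fib (2*k+2*t) + Nat.fib (2*k+2*t-1) = Nat.fib (2*k+2*t+2) by omega] at hD2
      rw [hD2, hD1, IH1, IH2]
      omega
    · -- count at fib(2k+2t+3) = fib(2k+2t+2) + fib(2k+2t+1)
      have hprev : Nat.count (CGMin k) (Nat.fib (2*k+2*t+2)) = Nat.fib (2*t+3) := by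
        have hD1 := count_translate (Nat.fib (2*k+2*t)) (Nat.fib (2*k+2*t))
          (fun m hm => shift1 k t hk ht m hm) (Nat.fib (2*k+2*t)) le_rfl
        have hD2 := count_translate (2 * Nat.fib (2*k+2*t)) (Nat.fib (2*k+2*t-1))
          (fun m hm => shift2 k t hk ht m hm) (Nat.fib (2*k+2*t-1)) le_rfl
        rw [show Nat.fib (2*k+2*t) + Nat.fib (2*k+2*t) = 2 * Nat.fib (2*k+2*t) by ring] at hD1
        rw [show 2 * Nat.fib (2*k+2*t) + Nat.fib (2*k+2*t-1) = Nat.fib (2*k+2*t+2) by omega] at hD2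
        rw [hD2, hD1, IH1, IH2]
        omega
      have hD3 := count_translate (Nat.fib (2*k+2*t+2)) (Nat.fib (2*k+2*t+2))
        (fun m hm => by
          have := shift1 k (t+1) hk (by omega) m (by rwa [e2])
          rwa [e2] at this)
        (Nat.fib (2*k+2*t+1)) Nat.fib_le_fib_succ
      rw [show Nat.fib (2*k+2*t+2) + Nat.fib (2*k+2*t+1) = Nat.fib (2*k+2*t+3) by omega] at hD3
      rw [hD3, hprev, IH3]
      omega

lemma cgmin_infinite (hk : 1 ≤ k) : (setOf (CGMin k)).Infinite := by
  apply Set.infinite_of_injective_forall_mem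
    (f := fun t : ℕ => Nat.fib (2*k+2*(t+1)) + Nat.fib (2*k))
  · apply StrictMono.injective
    apply strictMono_nat_of_lt_succ
    intro t
    have h1 : Nat.fib (2*k+2*(t+1)) < Nat.fib (2*k+2*(t+1)+1) := Nat.fib_lt_fib_succ (by omega)
    have h2 : Nat.fib (2*k+2*(t+1)+1) ≤ Nat.fib (2*k+2*(t+2)) := Nat.fib_mono (by omega)
    have e : 2*k+2*(t+1+1) = 2*k+2*(t+2) := by ring
    rw [e]
    omega
  · intro t
    show CGMin k (Nat.fib (2*k+2*(t+1)) + Nat.fib (2*k))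
    have hlt : Nat.fib (2*k) < Nat.fib (2*k+2*(t+1)) := by
      calc Nat.fib (2*k) < Nat.fib (2*k+1) := Nat.fib_lt_fib_succ (by omega)
      _ ≤ Nat.fib (2*k+2*(t+1)) := Nat.fib_mono (by omega)
    exact (shift1 k (t+1) hk (by omega) (Nat.fib (2*k)) hlt).mpr (cgmin_fib hk)

end CGAux

theorem cg_table_recursion (k : ℕ) (hk : 1 ≤ k) (ℓ : ℕ) (hℓ : 1 ≤ ℓ) :
    (∀ j : ℕ, Nat.fib (2 * ℓ + 1) + 1 ≤ j → j ≤ 2 * Nat.fib (2 * ℓ + 1) →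
        Nat.nth (CGMin k) (j - 1) =
          Nat.nth (CGMin k) (j - Nat.fib (2 * ℓ + 1) - 1) + Nat.fib (2 * k + 2 * ℓ)) ∧
    (∀ j : ℕ, 2 * Nat.fib (2 * ℓ + 1) + 1 ≤ j → j ≤ Nat.fib (2 * ℓ + 3) →
        Nat.nth (CGMin k) (j - 1) =
          Nat.nth (CGMin k) (j - 2 * Nat.fib (2 * ℓ + 1) - 1) +
            2 * Nat.fib (2 * k + 2 * ℓ)) := by
  classical
  have hp : (setOf (CGMin k)).Infinite := CGAux.cgmin_infinite hk
  obtain ⟨hC1, hC2, _⟩ := CGAux.count_fib_triple (k := k) hk ℓ hℓ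
  constructor
  · intro j hj1 hj2
    have hpos : 0 < Nat.fib (2*ℓ+1) := Nat.fib_pos.mpr (by omega)
    set i' := j - Nat.fib (2*ℓ+1) - 1 with hi'def
    have hi' : i' < Nat.fib (2*ℓ+1) := by omega
    set n := Nat.nth (CGMin k) i' with hn
    have hpn : CGMin k n := Nat.nth_mem_of_infinite hp i'
    have hnlt : n < Nat.fib (2*k+2*ℓ) := by
      rw [hn]
      exact Nat.nth_lt_of_lt_count (by rw [hC2]; exact hi')
    have hpn' : CGMin k (Nat.fib (2*k+2*ℓ) + n) := (CGAux.shift1 k ℓ hk hℓ n hnlt).mpr hpn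
    have hcn : Nat.count (CGMin k) n = i' := by
      rw [hn]; exact Nat.count_nth_of_infinite hp i'
    have hcount : Nat.count (CGMin k) (Nat.fib (2*k+2*ℓ) + n)
        = Nat.count (CGMin k) (Nat.fib (2*k+2*ℓ)) + Nat.count (CGMin k) n :=
      CGAux.count_translate _ _ (fun m hm => CGAux.shift1 k ℓ hk hℓ m hm) n hnlt.le
    rw [hC2, hcn] at hcount
    have hnth := Nat.nth_count hpn'
    rw [hcount] at hnth
    rw [show j - 1 = Nat.fib (2*ℓ+1) + i' by omega, hnth]
    omega
  · intro j hj1 hj2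
    have hpos : 0 < Nat.fib (2*ℓ+1) := Nat.fib_pos.mpr (by omega)
    have hpos2 : 0 < Nat.fib (2*ℓ) := Nat.fib_pos.mpr (by omega)
    have G2 : Nat.fib (2*ℓ+2) = Nat.fib (2*ℓ) + Nat.fib (2*ℓ+1) := Nat.fib_add_two
    have G3 : Nat.fib (2*ℓ+3) = Nat.fib (2*ℓ+1) + Nat.fib (2*ℓ+2) := Nat.fib_add_two
    set i' := j - 2 * Nat.fib (2*ℓ+1) - 1 with hi'def
    have hi' : i' < Nat.fib (2*ℓ) := by omega
    set n := Nat.nth (CGMin k) i' with hn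
    have hpn : CGMin k n := Nat.nth_mem_of_infinite hp i'
    have hnlt : n < Nat.fib (2*k+2*ℓ-1) := by
      rw [hn]
      exact Nat.nth_lt_of_lt_count (by rw [hC1]; exact hi')
    have hpn' : CGMin k (2 * Nat.fib (2*k+2*ℓ) + n) := (CGAux.shift2 k ℓ hk hℓ n hnlt).mpr hpn
    have hcn : Nat.count (CGMin k) n = i' := by
      rw [hn]; exact Nat.count_nth_of_infinite hp i'
    have h2F : Nat.count (CGMin k) (2 * Nat.fib (2*k+2*ℓ)) = 2 * Nat.fib (2*ℓ+1) := by
      have hD := CGAux.count_translate (Nat.fib (2*k+2*ℓ)) (Nat.fib (2*k+2*ℓ))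
        (fun m hm => CGAux.shift1 k ℓ hk hℓ m hm) (Nat.fib (2*k+2*ℓ)) le_rfl
      rw [show Nat.fib (2*k+2*ℓ) + Nat.fib (2*k+2*ℓ) = 2 * Nat.fib (2*k+2*ℓ) by ring] at hD
      rw [hD, hC2]
      ring
    have hcount : Nat.count (CGMin k) (2 * Nat.fib (2*k+2*ℓ) + n)
        = Nat.count (CGMin k) (2 * Nat.fib (2*k+2*ℓ)) + Nat.count (CGMin k) n :=
      CGAux.count_translate _ _ (fun m hm => CGAux.shift2 k ℓ hk hℓ m hm) n hnlt.le
    rw [h2F, hcn] at hcount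
    have hnth := Nat.nth_count hpn'
    rw [hcount] at hnth
    rw [show j - 1 = 2 * Nat.fib (2*ℓ+1) + i' by omega, hnth]
    omega
end

section
/- Fix k ≥ 1 and let q(j) be the j-th smallest positive integer in B_{2k}. For ℓ ≥ 1, the F_{2ℓ+3}-th element satisfies q(F_{2ℓ+3}) = F_{2k} + F_{2k+2} + ⋯ + F_{2k+2ℓ−2} + 2F_{2k+2ℓ}. -/
namespace CGaux

/-- `ok b l` : `l` is a valid CG digit string (bottom digit first); `b` records
whether a `2` is "pending" below (so a `2` needs a `0` first). -/
def ok : Bool → List ℕ → Bool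
  | _, [] => true
  | b, (d :: l) =>
    if d = 0 then ok false l
    else if d = 1 then ok b l
    else if d = 2 then !b && ok true l
    else false

/-- value of a digit string whose bottom digit sits at index `j`. -/
def val : ℕ → List ℕ → ℕ
  | _, [] => 0
  | j, d :: l => d * Nat.fib (2 * j) + val (j + 1) l

@[simp] lemma ok_nil (b) : ok b [] = true := rfl
@[simp] lemma ok_cons_zero (b l) : ok b (0 :: l) = ok false l := rfl
@[simp] lemma ok_cons_one (b l) : ok b (1 :: l) = ok b l := rfl
@[simp] lemma ok_cons_two (b l) : ok b (2 :: l) = (!b && ok true l) := rfl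
@[simp] lemma val_nil (j) : val j [] = 0 := rfl
@[simp] lemma val_cons (j d l) : val j (d :: l) = d * Nat.fib (2 * j) + val (j + 1) l := rfl

lemma ok_mono : ∀ l, ok true l = true → ok false l = true := by
  intro l
  induction l with
  | nil => simp
  | cons d t ih =>
    rcases d with _ | _ | _ | d <;> simp [ok] <;> tauto

lemma val_append : ∀ (t s : List ℕ) (j), val j (t ++ s) = val j t + val (j + t.length) s := by
  intro t
  induction t with
  | nil => simp
  | cons d t ih =>
    intro s j
    simp only [List.cons_append, val_cons, ih, List.length_cons]
    ring_nf

lemma ok_append : ∀ (t s : List ℕ) (b), ok b (t ++ s) = true → ok b t = true := by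
  intro t
  induction t with
  | nil => simp
  | cons d t ih =>
    intro s b h
    rcases d with _ | _ | _ | d <;> simp [ok] at h ⊢ <;> first
      | exact ih _ _ h
      | (exact ⟨h.1, ih _ _ h.2⟩)
      | exact h

/-- Main bound: a valid string at base index `j ≥ 1` has
`val + F (2j-1) ≤ F (2(j+len))`; with a pending `2` also `val + F (2j+1) ≤ …` (if nonempty). -/
lemma val_bound : ∀ (l : List ℕ) (j : ℕ) (b : Bool), 1 ≤ j → ok b l = true →
    (val j l + Nat.fib (2 * j - 1) ≤ Nat.fib (2 * (j + l.length))) ∧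
    (b = true → l = [] ∨ val j l + Nat.fib (2 * j + 1) ≤ Nat.fib (2 * (j + l.length))) := by
  intro l
  induction l with
  | nil =>
    intro j b hj _
    constructor
    · simpa using Nat.fib_mono (by omega : 2 * j - 1 ≤ 2 * (j + 0))
    · intro _; exact Or.inl rfl
  | cons d t ih =>
    intro j b hj h
    have hfib1 : Nat.fib (2 * j - 1) ≤ Nat.fib (2 * j + 1) := Nat.fib_mono (by omega)
    have hf2 : Nat.fib (2 * j) + Nat.fib (2 * j + 1) = Nat.fib (2 * j + 2) := by
      have := Nat.fib_add_two (n := 2 * j); omega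
    have hf1 : Nat.fib (2 * j - 1) + Nat.fib (2 * j) = Nat.fib (2 * j + 1) := by
      have := Nat.fib_add_two (n := 2 * j - 1)
      have e : 2 * j - 1 + 2 = 2 * j + 1 := by omega
      have e2 : 2 * j - 1 + 1 = 2 * j := by omega
      rw [e, e2] at this; omega
    have hf3 : Nat.fib (2 * j + 2) ≤ Nat.fib (2 * j + 3) := Nat.fib_mono (by omega)
    have hd : d = 0 ∨ d = 1 ∨ d = 2 := by
      by_contra hc
      push_neg at hc
      simp only [ok, if_neg hc.1, if_neg hc.2.1, if_neg hc.2.2] at h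
      exact Bool.false_ne_true h
    rcases hd with rfl | rfl | rfl
    · -- d = 0
      simp only [ok_cons_zero] at h
      obtain ⟨h1, _⟩ := ih (j + 1) false (by omega) h
      have e : 2 * (j + 1) - 1 = 2 * j + 1 := by omega
      rw [e] at h1
      have e2 : 2 * (j + 1 + t.length) = 2 * (j + (t.length + 1)) := by ring
      rw [e2] at h1
      constructor
      · simp only [val_cons, List.length_cons]; omega
      · intro _
        right; simp only [val_cons, List.length_cons]; omega
    · -- d = 1
      simp only [ok_cons_one] at h
      obtain ⟨h1, h2⟩ := ih (j + 1) b (by omega) h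
      have e : 2 * (j + 1) - 1 = 2 * j + 1 := by omega
      have e' : 2 * (j + 1) + 1 = 2 * j + 3 := by omega
      have e2 : 2 * (j + 1 + t.length) = 2 * (j + (t.length + 1)) := by ring
      rw [e, e2] at h1
      constructor
      · simp only [val_cons, List.length_cons]; omega
      · intro hb
        right
        rcases h2 hb with h2 | h2
        · subst h2
          simp only [val_cons, val_nil, List.length_cons, List.length_nil]
          have : 2 * (j + (0 + 1)) = 2 * j + 2 := by ring
          rw [this]; omega
        · rw [e', e2] at h2
          simp only [val_cons, List.length_cons]; omega
    · -- d = 2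
      simp only [ok_cons_two, Bool.and_eq_true, Bool.not_eq_true'] at h
      obtain ⟨hb, h⟩ := h
      subst hb
      obtain ⟨h1, h2⟩ := ih (j + 1) true (by omega) h
      refine ⟨?_, by simp⟩
      rcases h2 rfl with h2 | h2
      · subst h2
        simp only [val_cons, val_nil, List.length_cons, List.length_nil]
        have : 2 * (j + (0 + 1)) = 2 * j + 2 := by ring
        rw [this]; omega
      · have e' : 2 * (j + 1) + 1 = 2 * j + 3 := by omega
        have e2 : 2 * (j + 1 + t.length) = 2 * (j + (t.length + 1)) := by ring
        rw [e', e2] at h2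
        simp only [val_cons, List.length_cons]
        have hf4 : Nat.fib (2 * j + 1) + Nat.fib (2 * j + 2) = Nat.fib (2 * j + 3) := by
          have h := Nat.fib_add_two (n := 2 * j + 1)
          rw [show 2 * j + 1 + 2 = 2 * j + 3 by ring, show 2 * j + 1 + 1 = 2 * j + 2 by ring] at h
          omega
        omega

lemma val_lt (l : List ℕ) (j : ℕ) (hj : 1 ≤ j) (h : ok false l = true) :
    val j l < Nat.fib (2 * (j + l.length)) := by
  have h1 := (val_bound l j false hj h).1
  have : 0 < Nat.fib (2 * j - 1) := Nat.fib_pos.2 (by omega)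
  omega

lemma digit_eq {d₁ d₂ v₁ v₂ W : ℕ} (h₁ : v₁ < W) (h₂ : v₂ < W)
    (h : d₁ * W + v₁ = d₂ * W + v₂) : d₁ = d₂ ∧ v₁ = v₂ := by
  have hW : 0 < W := by omega
  have e : ∀ d v : ℕ, v < W → (d * W + v) / W = d := by
    intro d v hv
    rw [mul_comm, Nat.mul_add_div hW, Nat.div_eq_of_lt hv]
    omega
  have hd : d₁ = d₂ := by
    have := e d₁ v₁ h₁
    rw [h, e d₂ v₂ h₂] at this
    omega
  subst hd
  exact ⟨rfl, by omega⟩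

lemma val_injective : ∀ (n : ℕ) (l₁ l₂ : List ℕ) (j : ℕ), 1 ≤ j →
    l₁.length = n → l₂.length = n → ok false l₁ = true → ok false l₂ = true →
    val j l₁ = val j l₂ → l₁ = l₂ := by
  intro n
  induction n with
  | zero =>
    intro l₁ l₂ j _ h1 h2 _ _ _
    rw [List.length_eq_zero_iff.1 h1, List.length_eq_zero_iff.1 h2]
  | succ n ih =>
    intro l₁ l₂ j hj h1 h2 ho1 ho2 hv
    rcases List.eq_nil_or_concat l₁ with rfl | ⟨t₁, d₁, rfl⟩
    · simp at h1
    rcases List.eq_nil_or_concat l₂ with rfl | ⟨t₂, d₂, rfl⟩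
    · simp at h2
    simp only [List.concat_eq_append, List.length_append, List.length_singleton] at h1 h2
    have ht1 : t₁.length = n := by omega
    have ht2 : t₂.length = n := by omega
    simp only [List.concat_eq_append] at ho1 ho2 hv
    have ho1' := ok_append _ _ _ ho1
    have ho2' := ok_append _ _ _ ho2
    rw [val_append, val_append] at hv
    simp only [val_cons, val_nil, ht1, ht2] at hv
    have hb1 := val_lt t₁ j hj ho1'
    have hb2 := val_lt t₂ j hj ho2'
    rw [ht1] at hb1; rw [ht2] at hb2
    have hv' : d₁ * Nat.fib (2 * (j + n)) + val j t₁ = d₂ * Nat.fib (2 * (j + n)) + val j t₂ := by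
      omega
    obtain ⟨hd, hval⟩ := digit_eq hb1 hb2 hv'
    rw [ih t₁ t₂ j hj ht1 ht2 ho1' ho2' hval, hd]

/-- positional characterization of `ok`. -/
lemma ok_iff : ∀ (l : List ℕ) (b : Bool), ok b l = true ↔
    ((∀ i < l.length, l.getD i 0 ≤ 2) ∧
     (∀ i₁ i₂, i₁ < i₂ → i₂ < l.length → l.getD i₁ 0 = 2 → l.getD i₂ 0 = 2 →
        ∃ j, i₁ < j ∧ j < i₂ ∧ l.getD j 0 = 0) ∧
     (b = true → ∀ i < l.length, l.getD i 0 = 2 → ∃ j < i, l.getD j 0 = 0)) := by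
  intro l
  induction l with
  | nil => intro b; simp
  | cons d t ih =>
    intro b
    constructor
    · intro h
      have hd : d = 0 ∨ d = 1 ∨ d = 2 := by
        by_contra hc
        push_neg at hc
        simp only [ok, if_neg hc.1, if_neg hc.2.1, if_neg hc.2.2] at h
        exact Bool.false_ne_true h
      -- common consequences
      have key : ∀ b', ok b' t = true →
          (∀ i < t.length, t.getD i 0 ≤ 2) ∧
          (∀ i₁ i₂, i₁ < i₂ → i₂ < t.length → t.getD i₁ 0 = 2 → t.getD i₂ 0 = 2 →
            ∃ j, i₁ < j ∧ j < i₂ ∧ t.getD j 0 = 0) ∧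
          (b' = true → ∀ i < t.length, t.getD i 0 = 2 → ∃ j < i, t.getD j 0 = 0) :=
        fun b' h' => (ih b').1 h'
      rcases hd with rfl | rfl | rfl
      · simp only [ok_cons_zero] at h
        obtain ⟨hbd, hp, _⟩ := key false h
        refine ⟨?_, ?_, ?_⟩
        · intro i hi
          cases i with
          | zero => simp
          | succ i => simp only [List.getD_cons_succ]; exact hbd i (by simpa using hi)
        · intro i₁ i₂ h12 h2l ha hb
          cases i₁ with
          | zero => simp at ha
          | succ i₁ =>
            cases i₂ with
            | zero => omega
            | succ i₂ =>
              simp only [List.getD_cons_succ] at ha hb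
              obtain ⟨j, hj1, hj2, hj3⟩ := hp i₁ i₂ (by omega) (by simpa using h2l) ha hb
              exact ⟨j + 1, by omega, by omega, by simpa using hj3⟩
        · intro _ i hi h2
          cases i with
          | zero => simp at h2
          | succ i => exact ⟨0, by omega, by simp⟩
      · simp only [ok_cons_one] at h
        obtain ⟨hbd, hp, hz⟩ := key b h
        refine ⟨?_, ?_, ?_⟩
        · intro i hi
          cases i with
          | zero => simp
          | succ i => simp only [List.getD_cons_succ]; exact hbd i (by simpa using hi)
        · intro i₁ i₂ h12 h2l ha hb
          cases i₁ with
          | zero => simp at ha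
          | succ i₁ =>
            cases i₂ with
            | zero => omega
            | succ i₂ =>
              simp only [List.getD_cons_succ] at ha hb
              obtain ⟨j, hj1, hj2, hj3⟩ := hp i₁ i₂ (by omega) (by simpa using h2l) ha hb
              exact ⟨j + 1, by omega, by omega, by simpa using hj3⟩
        · intro hb i hi h2
          cases i with
          | zero => simp at h2
          | succ i =>
            simp only [List.getD_cons_succ] at h2
            obtain ⟨j, hj1, hj2⟩ := hz hb i (by simpa using hi) h2
            exact ⟨j + 1, by omega, by simpa using hj2⟩
      · simp only [ok_cons_two, Bool.and_eq_true, Bool.not_eq_true'] at h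
        obtain ⟨hbf, h⟩ := h
        obtain ⟨hbd, hp, hz⟩ := key true h
        refine ⟨?_, ?_, ?_⟩
        · intro i hi
          cases i with
          | zero => simp
          | succ i => simp only [List.getD_cons_succ]; exact hbd i (by simpa using hi)
        · intro i₁ i₂ h12 h2l ha hb
          cases i₁ with
          | zero =>
            cases i₂ with
            | zero => omega
            | succ i₂ =>
              simp only [List.getD_cons_succ] at hb
              obtain ⟨j, hj1, hj2⟩ := hz rfl i₂ (by simpa using h2l) hb
              exact ⟨j + 1, by omega, by omega, by simpa using hj2⟩
          | succ i₁ =>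
            cases i₂ with
            | zero => omega
            | succ i₂ =>
              simp only [List.getD_cons_succ] at ha hb
              obtain ⟨j, hj1, hj2, hj3⟩ := hp i₁ i₂ (by omega) (by simpa using h2l) ha hb
              exact ⟨j + 1, by omega, by omega, by simpa using hj3⟩
        · intro hbt
          rw [hbf] at hbt
          exact absurd hbt (by simp)
    · rintro ⟨hbd, hp, hz⟩
      have hd : d ≤ 2 := by simpa using hbd 0 (by simp)
      have hbd' : ∀ i < t.length, t.getD i 0 ≤ 2 := by
        intro i hi
        have := hbd (i + 1) (by simpa using hi)
        simpa using this
      have hp' : ∀ i₁ i₂, i₁ < i₂ → i₂ < t.length → t.getD i₁ 0 = 2 → t.getD i₂ 0 = 2 →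
          ∃ j, i₁ < j ∧ j < i₂ ∧ t.getD j 0 = 0 := by
        intro i₁ i₂ h12 h2l ha hb
        obtain ⟨j, hj1, hj2, hj3⟩ := hp (i₁ + 1) (i₂ + 1) (by omega) (by simpa using h2l)
          (by simpa using ha) (by simpa using hb)
        have hj : 1 ≤ j := by omega
        refine ⟨j - 1, by omega, by omega, ?_⟩
        have : j = (j - 1) + 1 := by omega
        rw [this] at hj3
        simpa using hj3
      interval_cases d
      · -- d = 0
        simp only [ok_cons_zero]
        exact (ih false).2 ⟨hbd', hp', by simp⟩
      · -- d = 1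
        simp only [ok_cons_one]
        refine (ih b).2 ⟨hbd', hp', ?_⟩
        intro hb i hi h2
        obtain ⟨j, hj1, hj2⟩ := hz hb (i + 1) (by simpa using hi) (by simpa using h2)
        have hj : 1 ≤ j := by
          rcases Nat.eq_zero_or_pos j with rfl | h
          · simp at hj2
          · exact h
        refine ⟨j - 1, by omega, ?_⟩
        have : j = (j - 1) + 1 := by omega
        rw [this] at hj2
        simpa using hj2
      · -- d = 2
        simp only [ok_cons_two, Bool.and_eq_true, Bool.not_eq_true']
        constructor
        · -- b = false
          by_contra hbt
          simp only [Bool.not_eq_false] at hbt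
          obtain ⟨j, hj1, _⟩ := hz hbt 0 (by simp) (by simp)
          omega
        · refine (ih true).2 ⟨hbd', hp', ?_⟩
          intro _ i hi h2
          obtain ⟨j, hj1, hj2, hj3⟩ := hp 0 (i + 1) (by omega) (by simpa using hi)
            (by simp) (by simpa using h2)
          have hj : 1 ≤ j := by omega
          refine ⟨j - 1, by omega, ?_⟩
          have : j = (j - 1) + 1 := by omega
          rw [this] at hj3
          simpa using hj3

/-- all `ok b` strings of length `n` -/
def strs : Bool → ℕ → List (List ℕ)
  | _, 0 => [[]]
  | b, n+1 =>
      ((strs false n).map (fun l => 0 :: l)) ++ ((strs b n).map (fun l => 1 :: l)) ++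
        (if b then [] else (strs true n).map (fun l => 2 :: l))

lemma strs_length : ∀ n, (strs false n).length = Nat.fib (2 * n + 2) ∧
    (strs true n).length = Nat.fib (2 * n + 1) := by
  intro n
  induction n with
  | zero => simp [strs]
  | succ n ih =>
    obtain ⟨h1, h2⟩ := ih
    have e1 : Nat.fib (2 * n + 1 + 2) = Nat.fib (2 * n + 1) + Nat.fib (2 * n + 2) := by
      have := Nat.fib_add_two (n := 2 * n + 1)
      rw [show 2 * n + 1 + 1 = 2 * n + 2 by ring] at this
      omega
    have e2 : Nat.fib (2 * n + 2 + 2) = Nat.fib (2 * n + 2) + Nat.fib (2 * n + 1 + 2) := by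
      have := Nat.fib_add_two (n := 2 * n + 2)
      rw [show 2 * n + 2 + 1 = 2 * n + 1 + 2 by ring] at this
      omega
    constructor
    · simp only [strs, List.length_append, List.length_map, if_neg (Bool.false_ne_true)]
      rw [show 2 * (n + 1) + 2 = 2 * n + 2 + 2 by ring]
      simp only [h1, h2]
      omega
    · simp only [strs, List.length_append, List.length_map, reduceIte]
      rw [show 2 * (n + 1) + 1 = 2 * n + 1 + 2 by ring]
      simp only [h1, h2, List.length_nil]
      omega

lemma mem_strs : ∀ (n : ℕ) (b : Bool) (L : List ℕ), L ∈ strs b n ↔ (L.length = n ∧ ok b L = true) := by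
  intro n
  induction n with
  | zero =>
    intro b L
    constructor
    · intro h; simp [strs] at h; subst h; simp
    · intro ⟨h, _⟩
      rw [List.length_eq_zero_iff.1 h]; simp [strs]
  | succ n ih =>
    intro b L
    simp only [strs, List.mem_append, List.mem_map]
    constructor
    · rintro ((⟨a, ha, rfl⟩ | ⟨a, ha, rfl⟩) | h)
      · obtain ⟨hl, ho⟩ := (ih false a).1 ha
        exact ⟨by simp [hl], by simpa using ho⟩
      · obtain ⟨hl, ho⟩ := (ih b a).1 ha
        exact ⟨by simp [hl], by simpa using ho⟩
      · rcases hb : b with _ | _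
        · rw [hb] at h
          simp only [if_neg (Bool.false_ne_true)] at h
          obtain ⟨a, ha, rfl⟩ := List.mem_map.1 h
          obtain ⟨hl, ho⟩ := (ih true a).1 ha
          refine ⟨by simp [hl], ?_⟩
          simp [ho]
        · rw [hb] at h; simp at h
    · rintro ⟨hl, ho⟩
      rcases L with _ | ⟨d, t⟩
      · simp at hl
      have hd : d = 0 ∨ d = 1 ∨ d = 2 := by
        by_contra hc
        push_neg at hc
        simp only [ok, if_neg hc.1, if_neg hc.2.1, if_neg hc.2.2] at ho
        exact Bool.false_ne_true ho
      have hlt : t.length = n := by simpa using hl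
      rcases hd with rfl | rfl | rfl
      · exact Or.inl (Or.inl ⟨t, (ih false t).2 ⟨hlt, by simpa using ho⟩, rfl⟩)
      · exact Or.inl (Or.inr ⟨t, (ih b t).2 ⟨hlt, by simpa using ho⟩, rfl⟩)
      · simp only [ok_cons_two, Bool.and_eq_true, Bool.not_eq_true'] at ho
        obtain ⟨rfl, ho⟩ := ho
        refine Or.inr ?_
        simp only [if_neg (Bool.false_ne_true)]
        exact List.mem_map.2 ⟨t, (ih true t).2 ⟨hlt, ho⟩, rfl⟩

lemma strs_nodup : ∀ (n : ℕ) (b : Bool), (strs b n).Nodup := by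
  intro n
  induction n with
  | zero => intro b; simp [strs]
  | succ n ih =>
    intro b
    have hinj : ∀ d : ℕ, Function.Injective (fun l : List ℕ => d :: l) := by
      intro d a b h
      simpa using h
    refine List.Nodup.append (List.Nodup.append ((ih false).map (hinj 0)) ((ih b).map (hinj 1)) ?_) ?_ ?_
    · intro a h0 h1
      obtain ⟨x, _, rfl⟩ := List.mem_map.1 h0
      obtain ⟨y, _, hy⟩ := List.mem_map.1 h1
      simp at hy
    · rcases b with _ | _
      · simp only [if_neg (Bool.false_ne_true)]
        exact (ih true).map (hinj 2)
      · simp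
    · intro a ha h2
      rcases b with _ | _
      · simp only [if_neg (Bool.false_ne_true)] at h2
        obtain ⟨y, _, hy⟩ := List.mem_map.1 h2
        rcases List.mem_append.1 ha with h | h <;> obtain ⟨x, _, rfl⟩ := List.mem_map.1 h <;> simp at hy
      · simp at h2

/-- `ok false` strings of length `n+1` with bottom digit `≥ 1`. -/
def strs1 (n : ℕ) : List (List ℕ) :=
  ((strs false n).map (fun l => 1 :: l)) ++ ((strs true n).map (fun l => 2 :: l))

lemma mem_strs1 (n : ℕ) (L : List ℕ) :
    L ∈ strs1 n ↔ (L.length = n + 1 ∧ ok false L = true ∧ 1 ≤ L.getD 0 0) := by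
  simp only [strs1, List.mem_append, List.mem_map]
  constructor
  · rintro (⟨a, ha, rfl⟩ | ⟨a, ha, rfl⟩)
    · obtain ⟨hl, ho⟩ := (mem_strs n false a).1 ha
      exact ⟨by simp [hl], by simpa using ho, by simp⟩
    · obtain ⟨hl, ho⟩ := (mem_strs n true a).1 ha
      exact ⟨by simp [hl], by simp [ho], by simp⟩
  · rintro ⟨hl, ho, hhd⟩
    rcases L with _ | ⟨d, t⟩
    · simp at hl
    have hd : d = 0 ∨ d = 1 ∨ d = 2 := by
      by_contra hc
      push_neg at hc
      simp only [ok, if_neg hc.1, if_neg hc.2.1, if_neg hc.2.2] at ho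
      exact Bool.false_ne_true ho
    have hlt : t.length = n := by simpa using hl
    rcases hd with rfl | rfl | rfl
    · simp at hhd
    · exact Or.inl ⟨t, (mem_strs n false t).2 ⟨hlt, by simpa using ho⟩, rfl⟩
    · simp only [ok_cons_two, Bool.and_eq_true, Bool.not_eq_true'] at ho
      exact Or.inr ⟨t, (mem_strs n true t).2 ⟨hlt, ho.2⟩, rfl⟩

lemma strs1_nodup (n : ℕ) : (strs1 n).Nodup := by
  have hinj : ∀ d : ℕ, Function.Injective (fun l : List ℕ => d :: l) := by
    intro d a b h
    simpa using h
  refine List.Nodup.append ((strs_nodup n false).map (hinj 1)) ((strs_nodup n true).map (hinj 2)) ?_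
  intro a h1 h2
  obtain ⟨x, _, rfl⟩ := List.mem_map.1 h1
  obtain ⟨y, _, hy⟩ := List.mem_map.1 h2
  simp at hy

lemma strs1_length (n : ℕ) : (strs1 n).length = Nat.fib (2 * n + 3) := by
  obtain ⟨h1, h2⟩ := strs_length n
  simp only [strs1, List.length_append, List.length_map, h1, h2]
  have := Nat.fib_add_two (n := 2 * n + 1)
  rw [show 2 * n + 1 + 2 = 2 * n + 3 by ring, show 2 * n + 1 + 1 = 2 * n + 2 by ring] at this
  omega

lemma getD_map_range (f : ℕ → ℕ) (n i : ℕ) :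
    (((List.range n).map f).getD i 0) = if i < n then f i else 0 := by
  split_ifs with h
  · rw [List.getD_eq_getElem _ _ (by simpa using h)]
    simp
  · exact List.getD_eq_default _ _ (by simpa using h)

lemma val_eq_sum : ∀ (l : List ℕ) (j : ℕ),
    val j l = ∑ i ∈ Finset.range l.length, l.getD i 0 * Nat.fib (2 * (j + i)) := by
  intro l
  induction l with
  | nil => simp
  | cons d t ih =>
    intro j
    rw [val_cons, List.length_cons, Finset.sum_range_succ', List.getD_cons_zero,
      show 2 * (j + 0) = 2 * j by ring, ih (j + 1), add_comm]
    congr 1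
    apply Finset.sum_congr rfl
    intro i _
    rw [List.getD_cons_succ, show 2 * (j + 1 + i) = 2 * (j + (i + 1)) by ring]

lemma val_replicate : ∀ (n j : ℕ),
    val j (List.replicate n 1) = ∑ i ∈ Finset.range n, Nat.fib (2 * (j + i)) := by
  intro n
  induction n with
  | zero => simp
  | succ n ih =>
    intro j
    rw [List.replicate_succ, val_cons, one_mul, ih (j + 1), Finset.sum_range_succ',
      show 2 * (j + 0) = 2 * j by ring, add_comm]
    congr 1
    apply Finset.sum_congr rfl
    intro i _
    rw [show 2 * (j + 1 + i) = 2 * (j + (i + 1)) by ring]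

lemma sum_fib_even (j : ℕ) (hj : 1 ≤ j) : ∀ n : ℕ,
    (∑ i ∈ Finset.range n, Nat.fib (2 * (j + i))) + Nat.fib (2 * j - 1) =
      Nat.fib (2 * (j + n) - 1) := by
  intro n
  induction n with
  | zero => simp
  | succ n ih =>
    rw [Finset.sum_range_succ, show j + (n + 1) = j + n + 1 by ring]
    have h1 : Nat.fib (2 * (j + n) - 1) + Nat.fib (2 * (j + n)) = Nat.fib (2 * (j + n + 1) - 1) := by
      have := Nat.fib_add_two (n := 2 * (j + n) - 1)
      rw [show 2 * (j + n) - 1 + 2 = 2 * (j + n + 1) - 1 by omega,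
        show 2 * (j + n) - 1 + 1 = 2 * (j + n) by omega] at this
      omega
    omega

/-- the value of a valid string with bottom digit `≥ 1` at base index `k` is in `CGMin k`. -/
lemma cgmin_of_list (k m : ℕ) (hk : 1 ≤ k) (L : List ℕ) (hlen : L.length = m + 1)
    (hok : ok false L = true) (hhd : 1 ≤ L.getD 0 0) : CGMin k (val k L) := by
  obtain ⟨hbd, hp, _⟩ := (ok_iff L false).1 hok
  have hgd : ∀ i, L.getD i 0 ≤ 2 := by
    intro i
    rcases Nat.lt_or_ge i L.length with h | h
    · exact hbd i h
    · rw [List.getD_eq_default _ _ h]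
      omega
  set f : ℕ → ℕ := fun i => if k ≤ i then L.getD (i - k) 0 else 0 with hf
  have hsupp : ∀ i, f i ≠ 0 → i ∈ Finset.range (k + m + 1) := by
    intro i hi
    simp only [Finset.mem_range]
    by_contra hc
    push_neg at hc
    apply hi
    simp only [hf]
    rw [if_pos (by omega)]
    exact List.getD_eq_default _ _ (by omega)
  set c : ℕ →₀ ℕ := Finsupp.onFinset (Finset.range (k + m + 1)) f hsupp with hc
  have hcapp : ∀ i, c i = f i := fun i => rfl
  refine ⟨c, ⟨?_, ?_, ?_, ?_⟩, ?_, ?_⟩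
  · intro i
    rw [hcapp]
    simp only [hf]
    split_ifs
    · exact hgd _
    · omega
  · rw [hcapp]
    simp only [hf]
    rw [if_neg (by omega)]
  · intro i₁ i₂ h12 h1 h2
    rw [hcapp] at h1 h2
    simp only [hf] at h1 h2
    have hk1 : k ≤ i₁ := by by_contra hcon; rw [if_neg hcon] at h1; omega
    have hk2 : k ≤ i₂ := by by_contra hcon; rw [if_neg hcon] at h2; omega
    rw [if_pos hk1] at h1
    rw [if_pos hk2] at h2
    have hl1 : i₁ - k < L.length := by
      by_contra hcon
      push_neg at hcon
      rw [List.getD_eq_default _ _ hcon] at h1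
      omega
    have hl2 : i₂ - k < L.length := by
      by_contra hcon
      push_neg at hcon
      rw [List.getD_eq_default _ _ hcon] at h2
      omega
    obtain ⟨j, hj1, hj2, hj3⟩ := hp (i₁ - k) (i₂ - k) (by omega) hl2 h1 h2
    refine ⟨j + k, by omega, by omega, ?_⟩
    rw [hcapp]
    simp only [hf]
    rw [if_pos (by omega), show j + k - k = j by omega]
    exact hj3
  · rw [hc, Finsupp.onFinset_sum _ (fun a => by simp)]
    rw [← Finset.sum_range_add_sum_Ico _ (show k ≤ k + m + 1 by omega)]
    have hz : ∑ i ∈ Finset.range k, f i * Nat.fib (2 * i) = 0 := by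
      apply Finset.sum_eq_zero
      intro i hi
      simp only [hf]
      rw [if_neg (by simpa using hi)]
      ring
    rw [hz, zero_add, Finset.sum_Ico_eq_sum_range]
    rw [show k + m + 1 - k = m + 1 by omega]
    rw [val_eq_sum, hlen]
    apply Finset.sum_congr rfl
    intro i _
    simp only [hf]
    rw [if_pos (by omega), show k + i - k = i by omega]
  · rw [hcapp]
    simp only [hf]
    rw [if_pos le_rfl, Nat.sub_self]
    exact hhd
  · intro i hi
    rw [hcapp]
    simp only [hf]
    rw [if_neg (by omega)]

/-- conversely, any element of `CGMin k` below `F (2(k+m+1))` is the value of such a string. -/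
lemma list_of_cgmin (k m n : ℕ) (hk : 1 ≤ k) (c : ℕ →₀ ℕ) (hcg : IsCG n c)
    (hck : 1 ≤ c k) (hlow : ∀ i < k, c i = 0) (hn : n < Nat.fib (2 * (k + m + 1))) :
    ((List.range (m + 1)).map (fun i => c (k + i))).length = m + 1 ∧
    ok false ((List.range (m + 1)).map (fun i => c (k + i))) = true ∧
    1 ≤ ((List.range (m + 1)).map (fun i => c (k + i))).getD 0 0 ∧
    val k ((List.range (m + 1)).map (fun i => c (k + i))) = n := by
  obtain ⟨hbd, _, hp, hsum⟩ := hcg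
  set L := (List.range (m + 1)).map (fun i => c (k + i)) with hL
  have hgd : ∀ i, L.getD i 0 = if i < m + 1 then c (k + i) else 0 := by
    intro i
    rw [hL, getD_map_range]
  -- support bound
  have hub : ∀ i, k + m + 1 ≤ i → c i = 0 := by
    intro i hi
    by_contra hcon
    have hmem : i ∈ c.support := Finsupp.mem_support_iff.2 hcon
    have hle : c i * Nat.fib (2 * i) ≤ n := by
      rw [hsum]
      exact Finset.single_le_sum (f := fun i => c i * Nat.fib (2 * i)) (fun _ _ => Nat.zero_le _) hmem
    have hfle : Nat.fib (2 * (k + m + 1)) ≤ Nat.fib (2 * i) := Nat.fib_mono (by omega)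
    have : 1 * Nat.fib (2 * i) ≤ c i * Nat.fib (2 * i) := Nat.mul_le_mul_right _ (by omega)
    omega
  have hlen : L.length = m + 1 := by simp [hL]
  refine ⟨hlen, ?_, ?_, ?_⟩
  · apply (ok_iff L false).2
    refine ⟨?_, ?_, ?_⟩
    · intro i _
      rw [hgd]
      split_ifs
      · exact hbd _
      · omega
    · intro i₁ i₂ h12 h2l ha hb
      rw [hlen] at h2l
      rw [hgd, if_pos (by omega)] at ha
      rw [hgd, if_pos (by omega)] at hb
      obtain ⟨j, hj1, hj2, hj3⟩ := hp (k + i₁) (k + i₂) (by omega) ha hb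
      refine ⟨j - k, by omega, by omega, ?_⟩
      rw [hgd, if_pos (by omega), show k + (j - k) = j by omega]
      exact hj3
    · intro h
      exact absurd h (by simp)
  · rw [hgd, if_pos (by omega)]
    simpa using hck
  · rw [val_eq_sum, hlen, hsum]
    rw [Finsupp.sum_of_support_subset c (s := Finset.Ico k (k + m + 1)) ?_ _ (fun i _ => by ring)]
    · rw [Finset.sum_Ico_eq_sum_range, show k + m + 1 - k = m + 1 by omega]
      apply Finset.sum_congr rfl
      intro i hi
      rw [hgd, if_pos (by simpa using hi)]
    · intro i hi
      rw [Finsupp.mem_support_iff] at hi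
      simp only [Finset.mem_Ico]
      constructor
      · by_contra hcon
        exact hi (hlow i (by omega))
      · by_contra hcon
        exact hi (hub i (by omega))

lemma ok_replicate_one (n : ℕ) (b : Bool) (l : List ℕ) :
    ok b (List.replicate n 1 ++ l) = ok b l := by
  induction n with
  | zero => simp
  | succ n ih => simpa [List.replicate_succ] using ih

end CGaux

open CGaux

theorem cg_table_last_row (k : ℕ) (hk : 1 ≤ k) (ℓ : ℕ) (hℓ : 1 ≤ ℓ) :
    Nat.nth (CGMin k) (Nat.fib (2 * ℓ + 3) - 1) =
      (∑ i ∈ Finset.range ℓ, Nat.fib (2 * k + 2 * i)) + 2 * Nat.fib (2 * k + 2 * ℓ) := by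
  classical
  set Lq : List ℕ := List.replicate ℓ 1 ++ [2] with hLq
  have hlenq : Lq.length = ℓ + 1 := by simp [hLq]
  have hokq : ok false Lq = true := by
    rw [hLq, ok_replicate_one]
    rfl
  have hheadq : 1 ≤ Lq.getD 0 0 := by
    rcases ℓ with _ | ℓ
    · omega
    · simp [hLq, List.replicate_succ]
  set Q := val k Lq with hQ
  have hQval : Q = (∑ i ∈ Finset.range ℓ, Nat.fib (2 * k + 2 * i)) + 2 * Nat.fib (2 * k + 2 * ℓ) := by
    rw [hQ, hLq, val_append, val_replicate, List.length_replicate]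
    simp only [val_cons, val_nil, add_zero]
    congr 1
    · apply Finset.sum_congr rfl
      intro i _
      rw [show 2 * (k + i) = 2 * k + 2 * i by ring]
    · rw [show 2 * (k + ℓ) = 2 * k + 2 * ℓ by ring]
  have hQfib : Q + Nat.fib (2 * k - 1) = Nat.fib (2 * (k + ℓ + 1)) := by
    rw [hQ, hLq, val_append, val_replicate, List.length_replicate]
    simp only [val_cons, val_nil, add_zero]
    have hs := sum_fib_even k hk ℓ
    have h1 : Nat.fib (2 * (k + ℓ) - 1) + Nat.fib (2 * (k + ℓ)) = Nat.fib (2 * (k + ℓ) + 1) := by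
      have := Nat.fib_add_two (n := 2 * (k + ℓ) - 1)
      rw [show 2 * (k + ℓ) - 1 + 2 = 2 * (k + ℓ) + 1 by omega,
        show 2 * (k + ℓ) - 1 + 1 = 2 * (k + ℓ) by omega] at this
      omega
    have h2 : Nat.fib (2 * (k + ℓ)) + Nat.fib (2 * (k + ℓ) + 1) = Nat.fib (2 * (k + ℓ) + 2) := by
      have := Nat.fib_add_two (n := 2 * (k + ℓ))
      omega
    rw [show 2 * (k + ℓ + 1) = 2 * (k + ℓ) + 2 by ring]
    omega
  have hfibpos : 0 < Nat.fib (2 * k - 1) := Nat.fib_pos.2 (by omega)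
  have hQcg : CGMin k Q := cgmin_of_list k ℓ hk Lq hlenq hokq hheadq
  have hcard : (Finset.filter (CGMin k) (Finset.range Q)).card = Nat.fib (2 * ℓ + 3) - 1 := by
    have hLqmem : Lq ∈ (strs1 ℓ).toFinset := by
      rw [List.mem_toFinset, mem_strs1]
      exact ⟨hlenq, hokq, hheadq⟩
    have hcardS : ((strs1 ℓ).toFinset.erase Lq).card = Nat.fib (2 * ℓ + 3) - 1 := by
      rw [Finset.card_erase_of_mem hLqmem, List.toFinset_card_of_nodup (strs1_nodup ℓ),
        strs1_length]
    rw [← hcardS]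
    set F : ℕ → List ℕ :=
      fun m => if h : CGMin k m then (List.range (ℓ + 1)).map (fun i => h.choose (k + i)) else []
      with hF
    have hFval : ∀ m ∈ Finset.filter (CGMin k) (Finset.range Q),
        val k (F m) = m ∧ F m ∈ (strs1 ℓ).toFinset.erase Lq := by
      intro m hm
      simp only [Finset.mem_filter, Finset.mem_range] at hm
      obtain ⟨hmQ, hcg⟩ := hm
      have hspec := hcg.choose_spec
      have hlist := list_of_cgmin k ℓ m hk hcg.choose hspec.1 hspec.2.1 hspec.2.2 (by omega)
      have hFm : F m = (List.range (ℓ + 1)).map (fun i => hcg.choose (k + i)) := dif_pos hcg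
      have hvm : val k (F m) = m := by rw [hFm]; exact hlist.2.2.2
      refine ⟨hvm, ?_⟩
      rw [Finset.mem_erase, List.mem_toFinset, mem_strs1]
      refine ⟨?_, ?_⟩
      · intro hEq
        rw [hEq, ← hQ] at hvm
        omega
      · rw [hFm]
        exact ⟨hlist.1, hlist.2.1, hlist.2.2.1⟩
    apply le_antisymm
    · apply Finset.card_le_card_of_injOn F (fun m hm => (hFval m hm).2)
      intro m₁ h₁ m₂ h₂ hFeq
      have v₁ := (hFval m₁ h₁).1
      have v₂ := (hFval m₂ h₂).1
      rw [← v₁, ← v₂, hFeq]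
    · apply Finset.card_le_card_of_injOn (val k)
      · intro L hL
        rw [Finset.mem_coe, Finset.mem_erase, List.mem_toFinset, mem_strs1] at hL
        obtain ⟨hne, hlen, hok, hhd⟩ := hL
        simp only [Finset.coe_filter, Set.mem_setOf_eq, Finset.mem_range]
        refine ⟨?_, cgmin_of_list k ℓ hk L hlen hok hhd⟩
        have hb := (val_bound L k false hk hok).1
        rw [hlen, show k + (ℓ + 1) = k + ℓ + 1 by ring] at hb
        have hle : val k L ≤ Q := by omega
        have hne' : val k L ≠ Q := by
          intro hEq
          exact hne (val_injective (ℓ + 1) L Lq k hk hlen hlenq hok hokq (hEq.trans hQ))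
        omega
      · intro L₁ h₁ L₂ h₂ hv
        rw [Finset.mem_coe, Finset.mem_erase, List.mem_toFinset, mem_strs1] at h₁ h₂
        exact val_injective (ℓ + 1) L₁ L₂ k hk h₁.2.1 h₂.2.1 h₁.2.2.1 h₂.2.2.1 hv
  have hcount : Nat.count (CGMin k) Q = Nat.fib (2 * ℓ + 3) - 1 := by
    rw [Nat.count_eq_card_filter_range]
    exact hcard
  have hnth := Nat.nth_count (p := CGMin k) hQcg
  rw [hcount] at hnth
  rw [hnth]
  exact hQval
end
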